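/- arXiv:2308.00901 — 9 statements merged into one kernel-verified Lean document; each statement's English description precedes it below -/
import Mathlib

section
/- Let λ be a nonzero real number and let t be a real number with |t| < 1. Then the series Σ_{n=1}^{∞} H_{n,λ} t^n converges and Σ_{n=1}^{∞} H_{n,λ} t^n = −log_λ(1−t)/(1−t). -/
open Finset

/-- The degenerate falling factorial `(x)_{n,λ} = x(x-λ)⋯(x-(n-1)λ)`, with `(x)_{0,λ} = 1`. -/
noncomputable def degFall (x lam : ℝ) (n : ℕ) : ℝ :=
  ∏ i ∈ Finset.range n, (x - i * lam)

/-- The degenerate harmonic numbers `H_{n,λ} = Σ_{k=1}^n (-λ)^(k-1) (1)_{k,1/λ} / k!`, `H_{0,λ}=0`. -/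
noncomputable def degHarm (lam : ℝ) (n : ℕ) : ℝ :=
  ∑ k ∈ Finset.Icc 1 n, (-lam) ^ (k - 1) * degFall 1 (1 / lam) k / (k.factorial : ℝ)

/-- The degenerate harmonic numbers of order `α`:
`H_{n,λ}(α) = Σ_{k=1}^n (-λ)^(k-1) (1)_{k,1/λ} / (k^α (k-1)!)`, `H_{0,λ}(α)=0`. -/
noncomputable def degHarmOrd (lam : ℝ) (α : ℕ) (n : ℕ) : ℝ :=
  ∑ k ∈ Finset.Icc 1 n,
    (-lam) ^ (k - 1) * degFall 1 (1 / lam) k / ((k : ℝ) ^ α * ((k - 1).factorial : ℝ))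

/-- The alternating degenerate harmonic numbers of order `α`:
`H̄_{n,λ}(α) = Σ_{k=1}^n C(n,k) λ^(k-1) (1)_{k,1/λ} / (k^α (k-1)!)`, `H̄_{0,λ}(α)=0`. -/
noncomputable def altDegHarmOrd (lam : ℝ) (α : ℕ) (n : ℕ) : ℝ :=
  ∑ k ∈ Finset.Icc 1 n,
    (n.choose k : ℝ) * lam ^ (k - 1) * degFall 1 (1 / lam) k /
      ((k : ℝ) ^ α * ((k - 1).factorial : ℝ))

/-- The degenerate logarithm: `degLog λ x = (x^λ - 1)/λ`, i.e. `log_λ(1+t) = degLog λ (1+t)`. -/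
noncomputable def degLog (lam x : ℝ) : ℝ :=
  (x ^ lam - 1) / lam

/-- The degenerate polylogarithm
`Li_{k,λ}(x) = Σ_{n=1}^∞ (-λ)^(n-1) (1)_{n,1/λ} x^n / ((n-1)! n^k)` (as a `tsum`, reindexed). -/
noncomputable def degPolylog (k : ℕ) (lam x : ℝ) : ℝ :=
  ∑' n : ℕ, (-lam) ^ n * degFall 1 (1 / lam) (n + 1) * x ^ (n + 1) /
    ((n.factorial : ℝ) * ((n : ℝ) + 1) ^ k)

/-- The degenerate hyperharmonic numbers of order `α`:
`H_{n,λ}^{(1)}(α) = H_{n,λ}(α)`, `H_{n,λ}^{(r)}(α) = Σ_{k=1}^n H_{k,λ}^{(r-1)}(α)` for `r ≥ 2`. -/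
noncomputable def degHyperHarm (lam : ℝ) (α : ℕ) : ℕ → ℕ → ℝ
  | 0, _ => 0
  | 1, n => degHarmOrd lam α n
  | r + 2, n => ∑ k ∈ Finset.Icc 1 n, degHyperHarm lam α (r + 1) k

section Aux

open Filter

/-- Binomial coefficient `binom(lam, k)` as `degFall lam 1 k / k!`. -/
noncomputable def bcf (lam : ℝ) (k : ℕ) : ℝ := degFall lam 1 k / (k.factorial : ℝ)

lemma bcf_zero (lam : ℝ) : bcf lam 0 = 1 := by simp [bcf, degFall]

lemma bcf_succ (lam : ℝ) (k : ℕ) :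
    bcf lam (k + 1) = (lam - k) * bcf lam k / (k + 1) := by
  have hk : (k.factorial : ℝ) ≠ 0 := Nat.cast_ne_zero.2 k.factorial_ne_zero
  have hk1 : ((k : ℝ) + 1) ≠ 0 := by positivity
  simp only [bcf, degFall, Finset.prod_range_succ, Nat.factorial_succ]
  push_cast
  field_simp

lemma abs_bcf_succ (lam : ℝ) (k : ℕ) :
    |bcf lam (k + 1)| = |lam - k| * |bcf lam k| / (k + 1) := by
  rw [bcf_succ, abs_div, abs_mul, abs_of_pos (show (0:ℝ) < (k:ℝ) + 1 by positivity)]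

lemma summable_w (lam : ℝ) {x : ℝ} (h0 : 0 ≤ x) (h1 : x < 1) :
    Summable (fun k : ℕ => ((k : ℝ) + 1) * |bcf lam k| * x ^ k) := by
  set r' : ℝ := (1 + x) / 2 with hr'def
  have hr'1 : r' < 1 := by rw [hr'def]; linarith
  have hxr' : x < r' := by rw [hr'def]; linarith
  apply summable_of_ratio_norm_eventually_le hr'1
  have h1k : Tendsto (fun k : ℕ => 1 / ((k : ℝ) + 1)) atTop (nhds 0) :=
    tendsto_one_div_add_atTop_nhds_zero_nat
  have hq : Tendsto (fun k : ℕ => ((k : ℝ) + 2) * (|lam| + k) * x / (((k : ℝ) + 1) ^ 2))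
      atTop (nhds x) := by
    have h2 : Tendsto
        (fun k : ℕ => (1 + 1 / ((k : ℝ) + 1)) * (1 + (|lam| - 1) * (1 / ((k : ℝ) + 1))) * x)
        atTop (nhds ((1 + 0) * (1 + (|lam| - 1) * 0) * x)) :=
      (((tendsto_const_nhds.add h1k)).mul
        (tendsto_const_nhds.add (tendsto_const_nhds.mul h1k))).mul_const x
    norm_num at h2
    refine h2.congr fun k => ?_
    have hk1 : ((k : ℝ) + 1) ≠ 0 := by positivity
    field_simp
    ring
  filter_upwards [hq.eventually_lt_const hxr'] with k hk
  have hbs := abs_bcf_succ lam k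
  have hk1 : (0:ℝ) < (k : ℝ) + 1 := by positivity
  have hlk : |lam - (k : ℝ)| ≤ |lam| + k := by
    calc |lam - (k : ℝ)| ≤ |lam| + |(k : ℝ)| := abs_sub lam k
    _ = |lam| + k := by rw [Nat.abs_cast]
  have hA0 : (0:ℝ) ≤ ((k + 1 : ℕ) : ℝ) + 1 := by positivity
  have hB0 : (0:ℝ) ≤ ((k : ℕ) : ℝ) + 1 := by positivity
  rw [Real.norm_eq_abs, Real.norm_eq_abs,
    abs_of_nonneg (mul_nonneg (mul_nonneg hA0 (abs_nonneg _)) (pow_nonneg h0 _)),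
    abs_of_nonneg (mul_nonneg (mul_nonneg hB0 (abs_nonneg _)) (pow_nonneg h0 _))]
  push_cast
  calc ((k : ℝ) + 1 + 1) * |bcf lam (k + 1)| * x ^ (k + 1)
      = ((k : ℝ) + 2) * (|lam - k| * |bcf lam k| / ((k : ℝ) + 1)) * x ^ (k + 1) := by
        rw [hbs]; ring
    _ ≤ ((k : ℝ) + 2) * ((|lam| + k) * |bcf lam k| / ((k : ℝ) + 1)) * x ^ (k + 1) := by
        gcongr
    _ = (((k : ℝ) + 2) * (|lam| + k) * x / (((k : ℝ) + 1) ^ 2)) *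
          (((k : ℝ) + 1) * |bcf lam k| * x ^ k) := by
        field_simp
        ring
    _ ≤ r' * (((k : ℝ) + 1) * |bcf lam k| * x ^ k) := by
        apply mul_le_mul_of_nonneg_right hk.le (by positivity)

/-- The binomial series. -/
lemma hasSum_bcf (lam : ℝ) {x : ℝ} (hx : |x| < 1) :
    HasSum (fun k : ℕ => bcf lam k * x ^ k) ((1 + x) ^ lam) := by
  set r : ℝ := (1 + |x|) / 2 with hrdef
  have hax : 0 ≤ |x| := abs_nonneg x
  have hxr : |x| < r := by rw [hrdef]; linarith
  have hr0 : (0:ℝ) < r := by rw [hrdef]; linarith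
  have hr1 : r < 1 := by rw [hrdef]; linarith
  set s : Set ℝ := Metric.ball (0 : ℝ) r with hsdef
  have hs : IsOpen s := Metric.isOpen_ball
  have hsc : IsPreconnected s := (convex_ball (0:ℝ) r).isPreconnected
  have hmem : ∀ y : ℝ, y ∈ s ↔ |y| < r := by
    intro y; rw [hsdef, Metric.mem_ball, Real.dist_eq, sub_zero]
  set g : ℕ → ℝ → ℝ := fun n y => bcf lam n * y ^ n with hgdef
  set g' : ℕ → ℝ → ℝ := fun n y => bcf lam n * ((n : ℝ) * y ^ (n - 1)) with hg'def
  set u : ℕ → ℝ := fun n => (1 / r) * (((n : ℝ) + 1) * |bcf lam n| * r ^ n) with hudef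
  have hu : Summable u := (summable_w lam hr0.le hr1).mul_left _
  have hg : ∀ (n : ℕ) (y : ℝ), y ∈ s → HasDerivAt (g n) (g' n y) y := fun n y _ =>
    (hasDerivAt_pow n y).const_mul _
  have hg' : ∀ (n : ℕ) (y : ℝ), y ∈ s → ‖g' n y‖ ≤ u n := by
    intro n y hy
    have hyr : |y| < r := (hmem y).1 hy
    rw [Real.norm_eq_abs]
    have habs : |g' n y| = |bcf lam n| * ((n : ℝ) * |y| ^ (n - 1)) := by
      rw [hg'def]
      simp [abs_mul, abs_pow, Nat.abs_cast]
    rw [habs]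
    rcases Nat.eq_zero_or_pos n with h | h
    · subst h
      simp only [Nat.cast_zero, zero_mul, mul_zero]
      simp only [hudef]; positivity
    · have hun : u n = ((n : ℝ) + 1) * |bcf lam n| * r ^ (n - 1) := by
        have hn' : n - 1 + 1 = n := Nat.succ_pred_eq_of_pos h
        simp only [hudef]
        have hrn : r ^ n = r ^ (n - 1) * r := by rw [← pow_succ, hn']
        rw [hrn]
        field_simp
      rw [hun]
      have h1 : |y| ^ (n - 1) ≤ r ^ (n - 1) := pow_le_pow_left₀ (abs_nonneg y) hyr.le _
      have h2 : (n : ℝ) ≤ (n : ℝ) + 1 := by linarith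
      calc |bcf lam n| * ((n : ℝ) * |y| ^ (n - 1))
          ≤ |bcf lam n| * (((n : ℝ) + 1) * r ^ (n - 1)) := by
            apply mul_le_mul_of_nonneg_left _ (abs_nonneg _)
            apply mul_le_mul h2 h1 (by positivity) (by positivity)
        _ = ((n : ℝ) + 1) * |bcf lam n| * r ^ (n - 1) := by ring
  have h0s : (0 : ℝ) ∈ s := by rw [hmem]; simpa using hr0
  have hg0 : Summable (fun n => g n 0) := by
    apply summable_of_ne_finset_zero (s := {0})
    intro n hn
    have hn0 : n ≠ 0 := by simpa using hn
    simp [hgdef, zero_pow hn0]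
  set F : ℝ → ℝ := fun y => ∑' n, g n y with hFdef
  set D : ℝ → ℝ := fun y => ∑' n, g' n y with hDdef
  have key : ∀ y ∈ s, HasDerivAt F (D y) y := fun y hy =>
    hasDerivAt_tsum_of_isPreconnected hu hs hsc hg hg' h0s hg0 hy
  have keyS : ∀ y ∈ s, Summable (fun n => g n y) := fun y hy =>
    summable_of_summable_hasDerivAt_of_isPreconnected hu hs hsc hg hg' h0s hg0 hy
  have keyS' : ∀ y ∈ s, Summable (fun n => g' n y) := fun y hy =>
    Summable.of_norm_bounded hu (fun n => hg' n y hy)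
  have hrel : ∀ y ∈ s, (1 + y) * D y = lam * F y := by
    intro y hy
    have hD : HasSum (fun n => g' n y) (D y) := (keyS' y hy).hasSum
    have hF : HasSum (fun n => g n y) (F y) := (keyS y hy).hasSum
    have hshift : HasSum (fun n => g' (n + 1) y) (D y) := by
      exact (hasSum_nat_add_iff (f := fun n => g' n y) 1).mpr (by simpa [hg'def] using hD)
    have hcomb : HasSum (fun n => lam * g n y - g' n y * y) (lam * F y - D y * y) :=
      (hF.mul_left lam).sub (hD.mul_right y)
    have heq : ∀ n : ℕ, g' (n + 1) y = lam * g n y - g' n y * y := by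
      intro n
      simp only [hgdef, hg'def]
      rw [bcf_succ]
      cases n with
      | zero => push_cast; simp
      | succ m =>
        have hc : ((m : ℝ) + 1 + 1) ≠ 0 := by positivity
        simp only [Nat.add_sub_cancel]
        push_cast
        field_simp
        ring
    have hcomb' : HasSum (fun n => g' (n + 1) y) (lam * F y - D y * y) := by
      simp only [heq]; exact hcomb
    have hDy := hshift.unique hcomb'
    linear_combination hDy
  have hG : ∀ y ∈ s, HasDerivAt (fun z => F z * (1 + z) ^ (-lam)) 0 y := by
    intro y hy
    have hyr : |y| < r := (hmem y).1 hy
    have h1y : (0:ℝ) < 1 + y := by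
      have := (abs_lt.1 hyr).1; linarith
    have hadd : HasDerivAt (fun z : ℝ => 1 + z) 1 y := (hasDerivAt_id y).const_add 1
    have hP : HasDerivAt (fun z : ℝ => (1 + z) ^ (-lam))
        (1 * -lam * (1 + y) ^ (-lam - 1)) y :=
      hadd.rpow_const (p := -lam) (Or.inl h1y.ne')
    have hmulder := (key y hy).mul hP
    have hE : (1 + y) ^ (-lam - 1) = (1 + y) ^ (-lam) / (1 + y) := by
      rw [Real.rpow_sub h1y, Real.rpow_one]
    have hzero : D y * (1 + y) ^ (-lam) + F y * (1 * -lam * (1 + y) ^ (-lam - 1)) = 0 := by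
      rw [hE]
      have hne : (1 + y) ≠ 0 := h1y.ne'
      field_simp
      linear_combination (1 + y) ^ (-lam) * hrel y hy
    exact hzero ▸ hmulder
  have hconst : F x * (1 + x) ^ (-lam) = F 0 * (1 + 0) ^ (-lam) := by
    have hxs : x ∈ s := (hmem x).2 hxr
    refine (convex_ball (0:ℝ) r).is_const_of_fderivWithin_eq_zero (𝕜 := ℝ)
      (f := fun z => F z * (1 + z) ^ (-lam)) ?_ ?_ hxs h0s
    · intro z hz
      exact ((hG z hz).differentiableAt).differentiableWithinAt
    · intro z hz
      rw [fderivWithin_of_isOpen hs hz]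
      have := (hG z hz).hasFDerivAt.fderiv
      rw [this]
      ext w
      simp
  have hF0 : F 0 = 1 := by
    show (∑' n, g n 0) = 1
    rw [tsum_eq_single 0 (by
      intro n hn
      simp [hgdef, zero_pow hn])]
    simp [hgdef, bcf_zero]
  have h1x : (0:ℝ) < 1 + x := by
    have := (abs_lt.1 hx).1; linarith
  have hFx : F x = (1 + x) ^ lam := by
    rw [hF0] at hconst
    norm_num [Real.one_rpow] at hconst
    rw [Real.rpow_neg h1x.le] at hconst
    have hne : ((1 + x) ^ lam : ℝ) ≠ 0 := (Real.rpow_pos_of_pos h1x lam).ne'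
    field_simp at hconst
    exact hconst
  rw [← hFx]
  exact (keyS x ((hmem x).2 hxr)).hasSum

end Aux

lemma degFall_scale (lam : ℝ) (hlam : lam ≠ 0) (k : ℕ) :
    degFall lam 1 k = lam ^ k * degFall 1 (1 / lam) k := by
  rw [degFall, degFall]
  rw [show lam ^ k = ∏ _i ∈ Finset.range k, lam by
    rw [Finset.prod_const, Finset.card_range]]
  rw [← Finset.prod_mul_distrib]
  apply Finset.prod_congr rfl
  intro i _
  field_simp

theorem stmt_0 (lam : ℝ) (hlam : lam ≠ 0) (t : ℝ) (ht : |t| < 1) :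
    HasSum (fun n : ℕ => degHarm lam n * t ^ n)
      (-(degLog lam (1 - t)) / (1 - t)) := by
  have h1t : (1 : ℝ) - t ≠ 0 := by
    have := (abs_lt.1 ht).2; intro h; linarith
  -- binomial series at -t
  have hb : HasSum (fun k : ℕ => bcf lam k * (-t) ^ k) ((1 - t) ^ lam) := by
    have h := hasSum_bcf lam (x := -t) (by rwa [abs_neg])
    rwa [show (1 : ℝ) + -t = 1 - t by ring] at h
  set f : ℕ → ℝ := fun k =>
    if k = 0 then 0 else (-lam) ^ (k - 1) * degFall 1 (1 / lam) k / (k.factorial : ℝ) * t ^ k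
    with hfdef
  have hfk : ∀ k : ℕ, f (k + 1) = -(1 / lam) * (bcf lam (k + 1) * (-t) ^ (k + 1)) := by
    intro k
    rw [hfdef]
    simp only [Nat.succ_ne_zero, if_false, Nat.add_sub_cancel]
    rw [bcf, degFall_scale lam hlam (k + 1)]
    have hfac : ((k + 1).factorial : ℝ) ≠ 0 := Nat.cast_ne_zero.2 (k + 1).factorial_ne_zero
    have hlp : lam ^ (k + 1) ≠ 0 := pow_ne_zero _ hlam
    rw [neg_pow lam k, neg_pow t (k + 1), pow_succ lam k, pow_succ (-1 : ℝ) k]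
    field_simp
  have hf1 : HasSum (fun n => f (n + 1)) (-(1 / lam) * ((1 - t) ^ lam - 1)) := by
    have hb1 : HasSum (fun n : ℕ => bcf lam (n + 1) * (-t) ^ (n + 1)) ((1 - t) ^ lam - 1) := by
      exact (hasSum_nat_add_iff (f := fun k : ℕ => bcf lam k * (-t) ^ k) 1).mpr
        (by simpa [bcf_zero] using hb)
    simp only [hfk]
    exact hb1.mul_left _
  have hf : HasSum f (-(1 / lam) * ((1 - t) ^ lam - 1)) := by
    have h := (hasSum_nat_add_iff (f := f) 1).1 hf1
    simpa [hfdef] using h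
  have hgeo : HasSum (fun n : ℕ => t ^ n) (1 - t)⁻¹ := hasSum_geometric_of_abs_lt_one ht
  -- norm summability
  have hfn : Summable (fun k => ‖f k‖) := by
    have hw := (summable_w lam (abs_nonneg t) ht).mul_left (1 / |lam|)
    apply Summable.of_nonneg_of_le (fun k => norm_nonneg _) _ hw
    intro k
    rw [Real.norm_eq_abs]
    cases k with
    | zero =>
      simp only [hfdef, if_pos rfl, abs_zero]
      positivity
    | succ m =>
      rw [hfk m]
      rw [abs_mul, abs_mul, abs_pow, abs_neg, abs_neg, abs_div, abs_one]
      have h1 : |bcf lam (m + 1)| * |t| ^ (m + 1)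
          ≤ ((m : ℝ) + 1 + 1) * |bcf lam (m + 1)| * |t| ^ (m + 1) := by
        have : (1 : ℝ) ≤ (m : ℝ) + 1 + 1 := by linarith [(Nat.cast_nonneg m : (0:ℝ) ≤ (m:ℝ))]
        nlinarith [abs_nonneg (bcf lam (m + 1)), pow_nonneg (abs_nonneg t) (m + 1),
          mul_nonneg (abs_nonneg (bcf lam (m + 1))) (pow_nonneg (abs_nonneg t) (m + 1))]
      calc 1 / |lam| * (|bcf lam (m + 1)| * |t| ^ (m + 1))
          ≤ 1 / |lam| * (((m : ℝ) + 1 + 1) * |bcf lam (m + 1)| * |t| ^ (m + 1)) := by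
            apply mul_le_mul_of_nonneg_left _ (by positivity)
            calc |bcf lam (m + 1)| * |t| ^ (m + 1)
                ≤ ((m : ℝ) + 1 + 1) * |bcf lam (m + 1)| * |t| ^ (m + 1) := h1
            _ = ((m : ℝ) + 1 + 1) * |bcf lam (m + 1)| * |t| ^ (m + 1) := rfl
        _ = 1 / |lam| * ((↑(m + 1) + 1) * |bcf lam (m + 1)| * |t| ^ (m + 1)) := by
            push_cast; ring
  have hgn : Summable (fun n : ℕ => ‖t ^ n‖) := by
    have : Summable (fun n : ℕ => |t| ^ n) :=
      summable_geometric_of_abs_lt_one (by rwa [abs_abs])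
    simpa [Real.norm_eq_abs, abs_pow] using this
  have hprod := hasSum_sum_range_mul_of_summable_norm (f := f) (g := fun n => t ^ n) hfn hgn
  rw [hf.tsum_eq, hgeo.tsum_eq] at hprod
  have hsum : ∀ n : ℕ, (∑ k ∈ Finset.range (n + 1), f k * t ^ (n - k))
      = degHarm lam n * t ^ n := by
    intro n
    have hset : Finset.range (n + 1) = insert 0 (Finset.Icc 1 n) := by
      ext k
      simp only [Finset.mem_range, Finset.mem_insert, Finset.mem_Icc]
      omega
    rw [hset, Finset.sum_insert (by simp), degHarm, Finset.sum_mul]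
    have hz : f 0 = 0 := by rw [hfdef]; simp
    rw [hz, zero_mul, zero_add]
    apply Finset.sum_congr rfl
    intro k hk
    obtain ⟨hk1, hk2⟩ := Finset.mem_Icc.1 hk
    have hk0 : k ≠ 0 := by omega
    rw [hfdef]
    simp only [hk0, if_false]
    rw [mul_assoc, ← pow_add, Nat.add_sub_cancel' hk2]
  have hval : -(1 / lam) * ((1 - t) ^ lam - 1) * (1 - t)⁻¹
      = -(degLog lam (1 - t)) / (1 - t) := by
    rw [degLog]
    field_simp
  rw [hval] at hprod
  simp only [hsum] at hprod
  exact hprod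
end

section
/- Let λ be a nonzero real number and let n ≥ 1 be an integer. Then H_{n,−λ} = Σ_{k=1}^{n} C(n,k) (1)_{k,1/λ} λ^{k−1} / k!. -/
open Finset

noncomputable def R (x : ℝ) (n : ℕ) : ℝ := (∏ i ∈ Finset.range n, (x - i)) / n.factorial

lemma R_zero (x : ℝ) : R x 0 = 1 := by simp [R]

lemma pascalR (x : ℝ) (n : ℕ) : R (x + 1) (n + 1) = R x (n + 1) + R x n := by
  have h1 : ∏ i ∈ Finset.range (n + 1), (x + 1 - i) = (∏ i ∈ Finset.range n, (x - i)) * (x + 1) := by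
    rw [Finset.prod_range_succ']
    congr 1
    · apply Finset.prod_congr rfl
      intro i _
      push_cast
      ring
    · simp
  have h2 : ∏ i ∈ Finset.range (n + 1), (x - i) = (∏ i ∈ Finset.range n, (x - i)) * (x - n) := by
    rw [Finset.prod_range_succ]
  have hf : ((n + 1).factorial : ℝ) = (n + 1) * n.factorial := by
    rw [Nat.factorial_succ]; push_cast; ring
  have hn0 : (n.factorial : ℝ) ≠ 0 := by positivity
  have hn1 : ((n:ℝ) + 1) ≠ 0 := by positivity
  rw [R, R, R, h1, h2, hf]
  field_simp
  ring

lemma hockeyR (x : ℝ) (n : ℕ) :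
    ∑ k ∈ Finset.range (n + 1), R (x + k - 1) k = R (x + n) n := by
  induction n with
  | zero => simp [R_zero]
  | succ m ih =>
      rw [Finset.sum_range_succ, ih]
      have : x + (↑(m + 1) : ℝ) - 1 = x + m := by push_cast; ring
      rw [this]
      have : x + (↑(m + 1) : ℝ) = (x + m) + 1 := by push_cast; ring
      rw [this, pascalR]
      ring

lemma vandermondeR (x : ℝ) (m n : ℕ) :
    ∑ k ∈ Finset.range (n + 1), ((m.choose (n - k)) : ℝ) * R x k = R (x + m) n := by
  induction m generalizing n with
  | zero =>
      rw [Finset.sum_eq_single n]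
      · simp
      · intro k hk hkn
        have hk' : k < n + 1 := Finset.mem_range.mp hk
        have : n - k ≠ 0 := by omega
        rw [Nat.choose_eq_zero_of_lt (by omega)]
        simp
      · intro h; simp at h
  | succ m ih =>
      cases n with
      | zero => simp [R_zero]
      | succ p =>
          rw [Finset.sum_range_succ]
          have hstep : ∀ k ∈ Finset.range (p + 1),
              (((m+1).choose (p + 1 - k)) : ℝ) * R x k
                = ((m.choose (p + 1 - k)) : ℝ) * R x k + ((m.choose (p - k)) : ℝ) * R x k := by
            intro k hk
            have hk' : k < p + 1 := Finset.mem_range.mp hk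
            have h1 : p + 1 - k = (p - k) + 1 := by omega
            rw [h1, Nat.choose_succ_succ]
            push_cast
            ring
          rw [Finset.sum_congr rfl hstep, Finset.sum_add_distrib]
          have e1 : ∑ k ∈ Finset.range (p + 1), ((m.choose (p + 1 - k)) : ℝ) * R x k
              + ((m+1).choose (p + 1 - (p+1)) : ℝ) * R x (p + 1)
              = ∑ k ∈ Finset.range (p + 2), ((m.choose (p + 1 - k)) : ℝ) * R x k := by
            rw [Finset.sum_range_succ _ (p+1)]
            simp only [Nat.sub_self, Nat.choose_zero_right, Nat.cast_one]
          have hx1 : x + (↑(m + 1) : ℝ) = (x + m) + 1 := by push_cast; ring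
          rw [add_right_comm, e1, ih (p+1), ih p, hx1, pascalR]


theorem stmt_1 (lam : ℝ) (hlam : lam ≠ 0) (n : ℕ) (hn : 1 ≤ n) :
    degHarm (-lam) n =
      ∑ k ∈ Finset.Icc 1 n,
        (n.choose k : ℝ) * degFall 1 (1 / lam) k * lam ^ (k - 1) / (k.factorial : ℝ) := by
  have hlhs : degHarm (-lam) n = (∑ k ∈ Finset.Icc 1 n, R (lam + k - 1) k) / lam := by
    rw [degHarm, Finset.sum_div]
    apply Finset.sum_congr rfl
    intro k hk
    obtain ⟨hk1, hk2⟩ := Finset.mem_Icc.mp hk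
    rw [degFall, R]
    have h1 : ∀ i ∈ Finset.range k, (1:ℝ) - i * (1/(-lam)) = (lam + i)/lam := by
      intro i _; field_simp; ring
    rw [Finset.prod_congr rfl h1, Finset.prod_div_distrib, Finset.prod_const, Finset.card_range]
    have h2 : ∏ i ∈ Finset.range k, ((lam + k - 1 : ℝ) - i) = ∏ i ∈ Finset.range k, (lam + i) := by
      rw [← Finset.prod_range_reflect (fun j => lam + (j:ℝ)) k]
      apply Finset.prod_congr rfl
      intro j hj
      have hj' : j < k := Finset.mem_range.mp hj
      have hc : ((k - 1 - j : ℕ) : ℝ) = (k:ℝ) - 1 - j := by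
        have h3 : k - 1 - j = k - (1 + j) := by omega
        rw [h3, Nat.cast_sub (by omega)]
        push_cast; ring
      simp only [hc]
      ring
    rw [h2]
    have hpow : lam ^ k = lam ^ (k - 1) * lam := by
      rw [← pow_succ]; congr 1; omega
    have hfac : (k.factorial : ℝ) ≠ 0 := by positivity
    rw [hpow]
    rw [neg_neg]
    field_simp
  have hrhs : ∑ k ∈ Finset.Icc 1 n,
        (n.choose k : ℝ) * degFall 1 (1 / lam) k * lam ^ (k - 1) / (k.factorial : ℝ)
      = (∑ k ∈ Finset.Icc 1 n, (n.choose k : ℝ) * R lam k) / lam := by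
    rw [Finset.sum_div]
    apply Finset.sum_congr rfl
    intro k hk
    obtain ⟨hk1, hk2⟩ := Finset.mem_Icc.mp hk
    rw [degFall, R]
    have h1 : ∀ i ∈ Finset.range k, (1:ℝ) - i * (1/lam) = (lam - i)/lam := by
      intro i _; field_simp
    rw [Finset.prod_congr rfl h1, Finset.prod_div_distrib, Finset.prod_const, Finset.card_range]
    have hpow : lam ^ k = lam ^ (k - 1) * lam := by
      rw [← pow_succ]; congr 1; omega
    have hfac : (k.factorial : ℝ) ≠ 0 := by positivity
    rw [hpow]
    field_simp
  rw [hlhs, hrhs]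
  congr 1
  have hins : (Finset.range (n+1)) = insert 0 (Finset.Icc 1 n) := by
    ext x; simp; omega
  have hA : ∑ k ∈ Finset.Icc 1 n, R (lam + k - 1) k = R (lam + n) n - 1 := by
    have h := hockeyR lam n
    rw [hins, Finset.sum_insert (by simp)] at h
    simp only [Nat.cast_zero, add_zero] at h
    have h0 : R (lam - 1) 0 = 1 := R_zero _
    linarith
  have hB : ∑ k ∈ Finset.Icc 1 n, (n.choose k : ℝ) * R lam k = R (lam + n) n - 1 := by
    have hv := vandermondeR lam n n
    rw [hins, Finset.sum_insert (by simp)] at hv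
    have hsym : ∀ k ∈ Finset.Icc 1 n, ((n.choose (n-k)):ℝ) * R lam k = (n.choose k : ℝ) * R lam k := by
      intro k hk
      obtain ⟨_, hk2⟩ := Finset.mem_Icc.mp hk
      rw [Nat.choose_symm hk2]
    rw [Finset.sum_congr rfl hsym] at hv
    simp only [Nat.sub_zero, Nat.choose_self, Nat.cast_one, R_zero, one_mul] at hv
    linarith
  rw [hA, hB]
end

section
/- Let λ be a nonzero real number and let n ≥ 1 be an integer. Then (1)_{n,1/λ} λ^{n−1} / n! = Σ_{k=1}^{n} (−1)^{n−k} C(n,k) H_{k,−λ}. -/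
open Finset

open Finset

/-- generalized binomial coefficient C(x, j) over ℝ -/
noncomputable def Bb (x : ℝ) (j : ℕ) : ℝ :=
  (∏ i ∈ Finset.range j, (x - i)) / (j.factorial : ℝ)

lemma Bb_zero (x : ℝ) : Bb x 0 = 1 := by simp [Bb]

lemma prod_reflect (x : ℝ) (j : ℕ) :
    ∏ i ∈ Finset.range j, (x + i) = ∏ i ∈ Finset.range j, (x + j - 1 - i) := by
  induction j with
  | zero => simp
  | succ j ih =>
    rw [Finset.prod_range_succ, ih, Finset.prod_range_succ']
    congr 1
    · exact Finset.prod_congr rfl fun i _ => by push_cast; ring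
    · push_cast; ring

lemma Bb_pascal (x : ℝ) (j : ℕ) : Bb (x + 1) (j + 1) = Bb x (j + 1) + Bb x j := by
  unfold Bb
  have h1 : ∏ i ∈ Finset.range (j + 1), (x + 1 - i)
      = (x + 1) * ∏ i ∈ Finset.range j, (x - i) := by
    rw [Finset.prod_range_succ', mul_comm]
    congr 1
    · push_cast; ring
    · exact Finset.prod_congr rfl fun i _ => by push_cast; ring
  rw [h1, Finset.prod_range_succ, Nat.factorial_succ]
  have hj : (j.factorial : ℝ) ≠ 0 := Nat.cast_ne_zero.mpr j.factorial_ne_zero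
  have hj1 : ((j : ℝ) + 1) ≠ 0 := by positivity
  push_cast
  field_simp
  ring

lemma hs (x : ℝ) (k : ℕ) :
    ∑ j ∈ Finset.range (k + 1), Bb (x + j - 1) j = Bb (x + k) k := by
  induction k with
  | zero => simp [Bb_zero]
  | succ k ih =>
    rw [Finset.sum_range_succ, ih]
    have h := Bb_pascal (x + k) k
    have e1 : x + ((k : ℝ) + 1) - 1 = x + k := by ring
    have e2 : x + ((k : ℝ) + 1) = x + k + 1 := by ring
    push_cast [e1, e2, h]
    ring

lemma altsum (n : ℕ) (hn : 1 ≤ n) :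
    ∑ k ∈ Finset.range (n + 1), (-1 : ℝ) ^ k * (n.choose k : ℝ) = 0 := by
  have h := add_pow (-1 : ℝ) 1 n
  simp [zero_pow (show n ≠ 0 by omega)] at h
  linarith [h]

lemma keyL (x : ℝ) : ∀ n m : ℕ,
    ∑ k ∈ Finset.range (n + 1), (-1 : ℝ) ^ k * (n.choose k : ℝ) * Bb (x + k) (k + m)
      = (-1) ^ n * Bb x (n + m) := by
  intro n
  induction n with
  | zero => intro m; simp
  | succ n ih =>
    intro m
    rw [Finset.sum_range_succ']
    have hsplit : ∀ k ∈ Finset.range (n + 1),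
        (-1 : ℝ) ^ (k + 1) * ((n + 1).choose (k + 1) : ℝ) * Bb (x + ↑(k + 1)) ((k + 1) + m)
        = ((-1) ^ (k + 1) * (n.choose (k + 1) : ℝ) * Bb (x + ↑(k + 1)) ((k + 1) + m))
          - ((-1) ^ k * (n.choose k : ℝ) * Bb (x + k) (k + (m + 1)))
          - ((-1) ^ k * (n.choose k : ℝ) * Bb (x + k) (k + m)) := by
      intro k hk
      have hp : Bb (x + ↑(k + 1)) ((k + 1) + m)
          = Bb (x + k) (k + (m + 1)) + Bb (x + k) (k + m) := by
        have h := Bb_pascal (x + k) (k + m)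
        have e : x + (↑(k + 1) : ℝ) = x + k + 1 := by push_cast; ring
        have e2 : (k + 1) + m = (k + m) + 1 := by omega
        rw [e, e2, h, ← Nat.add_assoc]
      rw [Nat.choose_succ_succ, hp]
      push_cast
      ring
    rw [Finset.sum_congr rfl hsplit]
    rw [Finset.sum_sub_distrib, Finset.sum_sub_distrib, ih, ih]
    have hC : ∑ k ∈ Finset.range (n + 1),
        ((-1 : ℝ) ^ (k + 1) * (n.choose (k + 1) : ℝ) * Bb (x + ↑(k + 1)) ((k + 1) + m))
        = (∑ k ∈ Finset.range (n + 1), (-1 : ℝ) ^ k * (n.choose k : ℝ) * Bb (x + k) (k + m))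
          - Bb x m := by
      have h2 := Finset.sum_range_succ'
        (fun k => (-1 : ℝ) ^ k * (n.choose k : ℝ) * Bb (x + k) (k + m)) (n + 1)
      have h3 := Finset.sum_range_succ
        (fun k => (-1 : ℝ) ^ k * (n.choose k : ℝ) * Bb (x + k) (k + m)) (n + 1)
      simp only [Nat.choose_succ_self, Nat.cast_zero, Nat.cast_ofNat, Nat.cast_one, add_zero,
        zero_add, pow_zero, one_mul, Nat.choose_zero_right, Nat.cast_zero] at h2 h3
      rw [h3] at h2
      norm_num at h2 ⊢
      linarith [h2]
    rw [hC, ih]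
    have e3 : n + (m + 1) = (n + 1) + m := by omega
    rw [e3]
    simp
    ring
lemma degHarm_eq (lam : ℝ) (hlam : lam ≠ 0) (k : ℕ) :
    degHarm (-lam) k = (Bb (lam + k) k - 1) / lam := by
  unfold degHarm
  have hterm : ∀ j ∈ Finset.Icc 1 k,
      (-(-lam)) ^ (j - 1) * degFall 1 (1 / -lam) j / (j.factorial : ℝ)
        = Bb (lam + j - 1) j / lam := by
    intro j hj
    have hj1 : 1 ≤ j := (Finset.mem_Icc.mp hj).1
    unfold degFall Bb
    have h1 : ∀ i ∈ Finset.range j, (1 : ℝ) - i * (1 / -lam) = (lam + i) / lam :=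
      fun i _ => by field_simp; rw [sub_neg_eq_add]
    rw [Finset.prod_congr rfl h1, Finset.prod_div_distrib, Finset.prod_const,
      Finset.card_range, neg_neg, prod_reflect lam j]
    have hpow : lam ^ j = lam * lam ^ (j - 1) := by
      conv_lhs => rw [show j = 1 + (j - 1) by omega]
      rw [pow_add, pow_one]
    rw [hpow]
    have hf : (j.factorial : ℝ) ≠ 0 := Nat.cast_ne_zero.mpr j.factorial_ne_zero
    have hp : lam ^ (j - 1) ≠ 0 := pow_ne_zero _ hlam
    have he : ∀ i ∈ Finset.range j, lam + (j:ℝ) - 1 - i = lam + j - 1 - i := fun i _ => by ring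
    field_simp
  rw [Finset.sum_congr rfl hterm, ← Finset.sum_div]
  congr 1
  have h0 : Finset.range (k + 1) = insert 0 (Finset.Icc 1 k) := by
    ext a; simp only [Finset.mem_range, Finset.mem_insert, Finset.mem_Icc]; omega
  have hh := hs lam k
  rw [h0, Finset.sum_insert (by simp)] at hh
  have hb0 : Bb (lam + (0:ℕ) - 1) 0 = 1 := Bb_zero _
  rw [hb0] at hh
  linarith

theorem stmt_2 (lam : ℝ) (hlam : lam ≠ 0) (n : ℕ) (hn : 1 ≤ n) :
    degFall 1 (1 / lam) n * lam ^ (n - 1) / (n.factorial : ℝ) =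
      ∑ k ∈ Finset.Icc 1 n, (-1 : ℝ) ^ (n - k) * (n.choose k : ℝ) * degHarm (-lam) k := by
  have hlhs : degFall 1 (1 / lam) n * lam ^ (n - 1) / (n.factorial : ℝ) = Bb lam n / lam := by
    unfold degFall Bb
    have h1 : ∀ i ∈ Finset.range n, (1 : ℝ) - i * (1 / lam) = (lam - i) / lam :=
      fun i _ => by field_simp
    rw [Finset.prod_congr rfl h1, Finset.prod_div_distrib, Finset.prod_const, Finset.card_range]
    have hpow : lam ^ n = lam * lam ^ (n - 1) := by
      conv_lhs => rw [show n = 1 + (n - 1) by omega]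
      rw [pow_add, pow_one]
    rw [hpow]
    have hf : (n.factorial : ℝ) ≠ 0 := Nat.cast_ne_zero.mpr n.factorial_ne_zero
    have hp : lam ^ (n - 1) ≠ 0 := pow_ne_zero _ hlam
    field_simp
  rw [hlhs]
  have h1 : ∀ k ∈ Finset.Icc 1 n,
      (-1 : ℝ) ^ (n - k) * (n.choose k : ℝ) * degHarm (-lam) k
        = ((-1 : ℝ) ^ n / lam) *
            ((-1) ^ k * (n.choose k : ℝ) * Bb (lam + k) k - (-1) ^ k * (n.choose k : ℝ)) := by
    intro k hk
    have hkn : k ≤ n := (Finset.mem_Icc.mp hk).2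
    have hsgn : (-1 : ℝ) ^ n * (-1) ^ k = (-1) ^ (n - k) := by
      rw [← pow_add, show n + k = (n - k) + 2 * k by omega, pow_add, pow_mul]
      norm_num
    rw [← hsgn, degHarm_eq lam hlam k]
    field_simp
  rw [Finset.sum_congr rfl h1, ← Finset.mul_sum, Finset.sum_sub_distrib]
  have hIns : Finset.range (n + 1) = insert 0 (Finset.Icc 1 n) := by
    ext a; simp only [Finset.mem_range, Finset.mem_insert, Finset.mem_Icc]; omega
  have hA := keyL lam n 0
  simp only [Nat.add_zero] at hA
  rw [hIns, Finset.sum_insert (by simp)] at hA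
  have hB := altsum n hn
  rw [hIns, Finset.sum_insert (by simp)] at hB
  simp only [Nat.cast_zero, add_zero, pow_zero, one_mul, Nat.choose_zero_right, Nat.cast_one,
    Bb_zero] at hA hB
  rw [show (∑ k ∈ Finset.Icc 1 n, (-1:ℝ) ^ k * (n.choose k : ℝ) * Bb (lam + k) k)
      = (-1) ^ n * Bb lam n - 1 from by linarith,
    show (∑ k ∈ Finset.Icc 1 n, (-1:ℝ) ^ k * (n.choose k : ℝ)) = -1 from by linarith]
  have hsq : (-1 : ℝ) ^ n * (-1) ^ n = 1 := by
    rw [← pow_add, show n + n = 2 * n by ring, pow_mul]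
    norm_num
  field_simp
  linear_combination (-(Bb lam n)) * hsq
end

section
/- Let λ be a nonzero real number and let n ≥ 0 be an integer. Then H_{n+1,−λ}/(n+1) = Σ_{m=0}^{n} C(n,m) (1)_{m+1,1/λ} λ^m / ((m+1)² m!). -/
open Finset

open Polynomial in
lemma smeval_descPoch (x : ℝ) (j : ℕ) :
    (descPochhammer ℤ j).smeval x = ∏ i ∈ Finset.range j, (x - i) := by
  induction j with
  | zero => simp [descPochhammer_zero, Polynomial.smeval_one]
  | succ j ih =>
    rw [descPochhammer_succ_right, Polynomial.smeval_mul, ih, Finset.prod_range_succ,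
      Polynomial.smeval_sub, Polynomial.smeval_X, Polynomial.smeval_natCast]
    simp

lemma ring_choose_eq (x : ℝ) (j : ℕ) :
    Ring.choose x j = (∏ i ∈ Finset.range j, (x - i)) / (j.factorial : ℝ) := by
  have h := Ring.descPochhammer_eq_factorial_smul_choose (R := ℝ) x j
  rw [smeval_descPoch, nsmul_eq_mul] at h
  rw [h]; field_simp

lemma hockey (x : ℝ) (N : ℕ) :
    ∑ j ∈ Finset.range N, Ring.choose (x + j) (j + 1) = Ring.choose (x + N) N - 1 := by
  induction N with
  | zero => simp [Ring.choose_zero_right]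
  | succ N ih =>
    rw [Finset.sum_range_succ, ih]
    have h : (x + ((N : ℝ) + 1)) = (x + N) + 1 := by ring
    rw [Nat.cast_succ, h, Ring.choose_succ_succ]
    ring

lemma vander (x : ℝ) (N : ℕ) :
    ∑ m ∈ Finset.range N, ((N.choose (m + 1) : ℝ)) * Ring.choose x (m + 1)
      = Ring.choose (x + N) N - 1 := by
  have h := Ring.add_choose_eq (r := x) (s := (N : ℝ)) N (Commute.all _ _)
  rw [Finset.Nat.sum_antidiagonal_eq_sum_range_succ_mk] at h
  have h2 : ∀ k ∈ Finset.range (N + 1),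
      Ring.choose x k * Ring.choose ((N : ℝ)) (N - k) = (N.choose k : ℝ) * Ring.choose x k := by
    intro k hk
    rw [Ring.choose_natCast, Nat.choose_symm (Nat.lt_succ_iff.mp (Finset.mem_range.mp hk))]
    ring
  rw [Finset.sum_congr rfl h2, Finset.sum_range_succ'] at h
  simp only [Nat.choose_zero_right, Nat.cast_one, Ring.choose_zero_right, one_mul, mul_one] at h
  linarith [h]

lemma termL (lam : ℝ) (hlam : lam ≠ 0) (j : ℕ) :
    lam ^ j * degFall 1 (1 / -lam) (j + 1) / ((j + 1).factorial : ℝ) =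
      Ring.choose (lam + j) (j + 1) / lam := by
  have hprod : ∏ i ∈ Finset.range (j + 1), ((lam + (j : ℝ)) - i)
      = ∏ i ∈ Finset.range (j + 1), (lam + i) := by
    rw [← Finset.prod_range_reflect (fun i => lam + (i : ℝ)) (j + 1)]
    refine Finset.prod_congr rfl fun i hi => ?_
    have hij : i ≤ j := Nat.lt_succ_iff.mp (Finset.mem_range.mp hi)
    simp only [Nat.add_sub_cancel]
    rw [Nat.cast_sub hij]
    ring
  have hdf : degFall 1 (1 / -lam) (j + 1)
      = (∏ i ∈ Finset.range (j + 1), (lam + i)) / lam ^ (j + 1) := by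
    unfold degFall
    have : ∀ i ∈ Finset.range (j + 1), (1 - (i : ℝ) * (1 / -lam)) = (lam + i) / lam := by
      intro i _
      rw [eq_div_iff hlam, div_neg, mul_neg, sub_neg_eq_add, mul_one_div, add_mul, one_mul,
        div_mul_cancel₀ _ hlam]
    rw [Finset.prod_congr rfl this, Finset.prod_div_distrib, Finset.prod_const,
      Finset.card_range]
  rw [hdf, ring_choose_eq, hprod]
  have hf : ((j + 1).factorial : ℝ) ≠ 0 := Nat.cast_ne_zero.mpr (Nat.factorial_ne_zero _)
  field_simp
  ring

lemma termR (lam : ℝ) (hlam : lam ≠ 0) (n m : ℕ) :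
    (n.choose m : ℝ) * degFall 1 (1 / lam) (m + 1) * lam ^ m /
        (((m : ℝ) + 1) ^ 2 * (m.factorial : ℝ)) =
      ((n + 1).choose (m + 1) : ℝ) * Ring.choose lam (m + 1) / (lam * ((n : ℝ) + 1)) := by
  have hdf : degFall 1 (1 / lam) (m + 1)
      = (∏ i ∈ Finset.range (m + 1), (lam - i)) / lam ^ (m + 1) := by
    unfold degFall
    have : ∀ i ∈ Finset.range (m + 1), (1 - (i : ℝ) * (1 / lam)) = (lam - i) / lam := by
      intro i _
      rw [eq_div_iff hlam, mul_one_div, sub_mul, one_mul, div_mul_cancel₀ _ hlam]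
    rw [Finset.prod_congr rfl this, Finset.prod_div_distrib, Finset.prod_const,
      Finset.card_range]
  have hcc : ((n : ℝ) + 1) * (n.choose m : ℝ) = ((n + 1).choose (m + 1) : ℝ) * ((m : ℝ) + 1) := by
    exact_mod_cast congrArg (Nat.cast (R := ℝ)) (Nat.add_one_mul_choose_eq n m)
  rw [hdf, ring_choose_eq]
  have h1 : ((m : ℝ) + 1) ≠ 0 := by positivity
  have h2 : ((m.factorial : ℝ)) ≠ 0 := Nat.cast_ne_zero.mpr (Nat.factorial_ne_zero _)
  have h3 : ((n : ℝ) + 1) ≠ 0 := by positivity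
  have hfac : (((m + 1).factorial : ℝ)) = ((m : ℝ) + 1) * m.factorial := by
    rw [Nat.factorial_succ]; push_cast; ring
  rw [hfac]
  field_simp
  rw [pow_succ]
  linear_combination ((∏ i ∈ Finset.range (m + 1), (lam - (i:ℝ))) * lam ^ m * lam) * hcc

theorem stmt_3 (lam : ℝ) (hlam : lam ≠ 0) (n : ℕ) :
    degHarm (-lam) (n + 1) / ((n : ℝ) + 1) =
      ∑ m ∈ Finset.range (n + 1),
        (n.choose m : ℝ) * degFall 1 (1 / lam) (m + 1) * lam ^ m /
          (((m : ℝ) + 1) ^ 2 * (m.factorial : ℝ)) := by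
  have hL : degHarm (-lam) (n + 1)
      = (Ring.choose (lam + ((n : ℝ) + 1)) (n + 1) - 1) / lam := by
    unfold degHarm
    rw [neg_neg, ← Finset.Ico_add_one_right_eq_Icc, Finset.sum_Ico_eq_sum_range]
    have hcard : n + 1 + 1 - 1 = n + 1 := by omega
    rw [hcard]
    have hterm : ∀ j ∈ Finset.range (n + 1),
        lam ^ (1 + j - 1) * degFall 1 (1 / -lam) (1 + j) / ((1 + j).factorial : ℝ)
          = Ring.choose (lam + j) (j + 1) / lam := by
      intro j _
      have h := termL lam hlam j
      rw [add_comm 1 j]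
      simpa using h
    rw [Finset.sum_congr rfl hterm, ← Finset.sum_div, hockey]
    push_cast
    ring_nf
  have hterm2 : ∀ m ∈ Finset.range (n + 1),
      (n.choose m : ℝ) * degFall 1 (1 / lam) (m + 1) * lam ^ m /
          (((m : ℝ) + 1) ^ 2 * (m.factorial : ℝ))
        = ((n + 1).choose (m + 1) : ℝ) * Ring.choose lam (m + 1) / (lam * ((n : ℝ) + 1)) :=
    fun m _ => termR lam hlam n m
  rw [Finset.sum_congr rfl hterm2, ← Finset.sum_div, vander lam (n + 1), hL, div_div]
  push_cast
  ring_nf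
end

section
/- Let λ be a nonzero real number and let n ≥ 0 be an integer. Then (1)_{n+1,1/λ} λ^n / ((n+1)² n!) = Σ_{m=0}^{n} (−1)^{n−m} C(n,m) H_{m+1,−λ}/(m+1). -/
open Finset

noncomputable def myR (x : ℝ) (m : ℕ) : ℝ := (∏ i ∈ Finset.range m, (x + i)) / m.factorial

lemma myR_zero (x : ℝ) : myR x 0 = 1 := by simp [myR]

lemma myR_pascal (x : ℝ) (m : ℕ) : myR (x+1) (m+1) = myR (x+1) m + myR x (m+1) := by
  have h1 : ∏ i ∈ range (m+1), (x + 1 + (i:ℝ)) = (∏ i ∈ range m, (x + 1 + (i:ℝ))) * (x + 1 + m) :=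
    prod_range_succ _ _
  have h2 : ∏ i ∈ range (m+1), (x + (i:ℝ)) = (∏ i ∈ range m, (x + 1 + (i:ℝ))) * x := by
    rw [prod_range_succ' (fun i => x + (i:ℝ)) m]
    congr 1
    · exact prod_congr rfl (fun i _ => by push_cast; ring)
    · simp
  have hm : (m.factorial : ℝ) ≠ 0 := by positivity
  simp only [myR, h1, h2, Nat.factorial_succ]
  push_cast
  field_simp
  ring

lemma myR_hockey (x : ℝ) (m : ℕ) : ∑ k ∈ Icc 1 m, myR x k = myR (x+1) m - 1 := by
  induction m with
  | zero => simp [myR]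
  | succ m ih =>
    rw [Finset.sum_Icc_succ_top (by omega : 1 ≤ m+1), ih, myR_pascal]
    ring

lemma mydiff (f : ℕ → ℝ) (n : ℕ) :
    ∑ k ∈ range (n+2), (-1:ℝ)^k * ((n+1).choose k : ℝ) * f k
    = ∑ k ∈ range (n+1), (-1:ℝ)^k * (n.choose k : ℝ) * (f k - f (k+1)) := by
  have hL : ∑ k ∈ range (n+2), (-1:ℝ)^k * ((n+1).choose k : ℝ) * f k
      = (∑ k ∈ range (n+1), (-1:ℝ)^(k+1) * (((n.choose k : ℝ)) + (n.choose (k+1) : ℝ)) * f (k+1)) + f 0 := by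
    rw [sum_range_succ' (fun k => (-1:ℝ)^k * ((n+1).choose k : ℝ) * f k) (n+1)]
    simp [Nat.choose_succ_succ, add_comm]
  have hshift : ∑ k ∈ range (n+1), (-1:ℝ)^(k+1) * (n.choose (k+1) : ℝ) * f (k+1)
      = (∑ k ∈ range (n+2), (-1:ℝ)^k * (n.choose k : ℝ) * f k) - f 0 := by
    rw [sum_range_succ' (fun k => (-1:ℝ)^k * (n.choose k : ℝ) * f k) (n+1)]
    simp
  have htrunc : ∑ k ∈ range (n+2), (-1:ℝ)^k * (n.choose k : ℝ) * f k
      = ∑ k ∈ range (n+1), (-1:ℝ)^k * (n.choose k : ℝ) * f k := by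
    rw [sum_range_succ]
    simp [Nat.choose_succ_self]
  rw [hL]
  have : ∑ k ∈ range (n+1), (-1:ℝ)^(k+1) * (((n.choose k : ℝ)) + (n.choose (k+1) : ℝ)) * f (k+1)
      = (∑ k ∈ range (n+1), (-1:ℝ)^(k+1) * (n.choose k : ℝ) * f (k+1))
        + ∑ k ∈ range (n+1), (-1:ℝ)^(k+1) * (n.choose (k+1) : ℝ) * f (k+1) := by
    rw [← sum_add_distrib]; exact sum_congr rfl (fun k _ => by ring)
  rw [this, hshift, htrunc]
  have e1 : ∑ k ∈ range (n+1), (-1:ℝ)^k * (n.choose k : ℝ) * (f k - f (k+1))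
      = (∑ k ∈ range (n+1), (-1:ℝ)^k * (n.choose k : ℝ) * f k)
        - ∑ k ∈ range (n+1), (-1:ℝ)^k * (n.choose k : ℝ) * f (k+1) := by
    rw [← sum_sub_distrib]; exact sum_congr rfl (fun k _ => by ring)
  have e2 : ∑ k ∈ range (n+1), (-1:ℝ)^(k+1) * (n.choose k : ℝ) * f (k+1)
      = -∑ k ∈ range (n+1), (-1:ℝ)^k * (n.choose k : ℝ) * f (k+1) := by
    rw [← Finset.sum_neg_distrib]; exact sum_congr rfl (fun k _ => by ring)
  rw [e1, e2]; ring

lemma mymaster : ∀ (n : ℕ) (a : ℕ) (y : ℝ),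
    ∑ k ∈ range (n+1), (-1:ℝ)^k * (n.choose k : ℝ) * myR y (k+a)
    = (-1:ℝ)^n * (∏ i ∈ range (n+a), (y + a - 1 - i)) / (n+a).factorial := by
  intro n
  induction n with
  | zero =>
    intro a y
    simp only [zero_add, range_one, sum_singleton, pow_zero, Nat.choose_zero_right,
      Nat.cast_one, one_mul]
    have hrefl : ∏ i ∈ range a, (y + (a:ℝ) - 1 - i) = ∏ i ∈ range a, (y + i) := by
      rw [← prod_range_reflect (fun i => y + (i:ℝ)) a]
      refine prod_congr rfl (fun i hi => ?_)
      have hi' : i < a := mem_range.mp hi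
      have : ((a - 1 - i : ℕ) : ℝ) = (a:ℝ) - 1 - i := by
        have : a - 1 - i = a - (i+1) := by omega
        rw [this, Nat.cast_sub (by omega)]
        push_cast; ring
      rw [this]; ring
    rw [hrefl, myR]
  | succ n ih =>
    intro a y
    rw [mydiff (fun k => myR y (k+a)) n]
    have hstep : ∀ k : ℕ, myR y (k+a) - myR y (k+1+a) = -myR (y-1) (k+(a+1)) := by
      intro k
      have hp := myR_pascal (y-1) (k+a)
      have hy : y - 1 + 1 = y := by ring
      rw [hy] at hp
      have e1 : k+1+a = k+a+1 := by omega
      have e2 : k+(a+1) = k+a+1 := by omega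
      rw [e1, e2, hp]; ring
    have : ∑ k ∈ range (n+1), (-1:ℝ)^k * (n.choose k : ℝ) * (myR y (k+a) - myR y (k+1+a))
        = -∑ k ∈ range (n+1), (-1:ℝ)^k * (n.choose k : ℝ) * myR (y-1) (k+(a+1)) := by
      rw [← Finset.sum_neg_distrib]
      exact sum_congr rfl (fun k _ => by rw [hstep k]; ring)
    rw [this, ih (a+1) (y-1)]
    have e3 : n + (a+1) = n + 1 + a := by omega
    have e4 : ∏ i ∈ range (n+(a+1)), (y - 1 + ((a:ℝ)+1) - 1 - i)
        = ∏ i ∈ range (n+1+a), (y + a - 1 - i) := by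
      rw [e3]; exact prod_congr rfl (fun i _ => by ring)
    rw [← e4]
    push_cast
    ring_nf

lemma alt_choose_sum (n : ℕ) :
    ∑ k ∈ range (n+2), (-1:ℝ)^k * ((n+1).choose k : ℝ) = 0 := by
  have h := Int.alternating_sum_range_choose (n := n+1)
  rw [if_neg (by omega : ¬ (n+1 = 0))] at h
  exact_mod_cast h

lemma key_fall (lam : ℝ) (hl : lam ≠ 0) (k : ℕ) :
    lam ^ k * degFall 1 (1/lam) k = ∏ i ∈ range k, (lam - i) := by
  rw [degFall]
  have hp : lam ^ k = ∏ _i ∈ range k, lam := by simp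
  rw [hp, ← prod_mul_distrib]
  exact prod_congr rfl (fun i _ => by field_simp)

lemma key_rise (lam : ℝ) (hl : lam ≠ 0) (k : ℕ) :
    lam ^ k * degFall 1 (1/(-lam)) k = ∏ i ∈ range k, (lam + i) := by
  rw [degFall]
  have hp : lam ^ k = ∏ _i ∈ range k, lam := by simp
  rw [hp, ← prod_mul_distrib]
  refine prod_congr rfl (fun i _ => ?_)
  field_simp
  ring


lemma degHarm_closed (lam : ℝ) (hl : lam ≠ 0) (m : ℕ) :
    degHarm (-lam) (m+1) = (myR (lam+1) (m+1) - 1) / lam := by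
  rw [degHarm, ← myR_hockey lam (m+1), Finset.sum_div]
  refine sum_congr rfl (fun k hk => ?_)
  have hk1 : 1 ≤ k := (mem_Icc.mp hk).1
  have hkey := key_rise lam hl k
  have hpow : lam * lam ^ (k-1) = lam ^ k := by
    rw [← pow_succ']
    congr 1
    omega
  have hf : (k.factorial : ℝ) ≠ 0 := by positivity
  rw [neg_neg, myR]
  rw [div_div, div_eq_div_iff hf (by positivity)]
  calc lam ^ (k-1) * degFall 1 (1 / -lam) k * ((k.factorial : ℝ) * lam)
      = (lam * lam ^ (k-1)) * degFall 1 (1 / -lam) k * (k.factorial : ℝ) := by ring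
    _ = (lam ^ k * degFall 1 (1 / -lam) k) * (k.factorial : ℝ) := by rw [hpow]
    _ = (∏ i ∈ range k, (lam + i)) * (k.factorial : ℝ) := by rw [hkey]



lemma aux_term (A B c1 c2 R lam M N : ℝ) (hl : lam ≠ 0) (hM : M ≠ 0) (hN : N ≠ 0)
    (hch : N * c1 = c2 * M) :
    A * B * c1 * ((R - 1) / lam / M) = A * -1 / (lam * N) * (B * -1 * c2 * (R - 1)) := by
  field_simp
  linear_combination (A * B * (R - 1)) * hch

lemma aux_fin (Q P lam N F : ℝ) (hl : lam ≠ 0) (hN : N ≠ 0) (hF : F ≠ 0) (hQ : Q * Q = 1) :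
    P / (lam * N * F) = Q / (lam * N) * (Q * P / F - 1 - -1) := by
  field_simp
  linear_combination (-P) * hQ


theorem stmt_4 (lam : ℝ) (hlam : lam ≠ 0) (n : ℕ) :
    degFall 1 (1 / lam) (n + 1) * lam ^ n / (((n : ℝ) + 1) ^ 2 * (n.factorial : ℝ)) =
      ∑ m ∈ Finset.range (n + 1),
        (-1 : ℝ) ^ (n - m) * (n.choose m : ℝ) * (degHarm (-lam) (m + 1) / ((m : ℝ) + 1)) := by
  set P : ℝ := ∏ i ∈ range (n+1), (lam - (i:ℝ)) with hP
  have hfne : ∀ k : ℕ, ((k.factorial : ℝ)) ≠ 0 := fun k => by positivity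
  have hn1 : ((n:ℝ) + 1) ≠ 0 := by positivity
  -- LHS closed form
  have hln : lam ^ (n+1) ≠ 0 := pow_ne_zero _ hlam
  have hdf : degFall 1 (1/lam) (n+1) = P / lam ^ (n+1) := by
    rw [eq_div_iff hln, mul_comm]
    exact key_fall lam hlam (n+1)
  have hLHS : degFall 1 (1 / lam) (n + 1) * lam ^ n / (((n : ℝ) + 1) ^ 2 * (n.factorial : ℝ))
      = P / (lam * ((n:ℝ)+1) * ((n+1).factorial : ℝ)) := by
    rw [hdf, Nat.factorial_succ]
    push_cast
    rw [pow_succ]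
    field_simp
  rw [hLHS]
  -- master identity specialized
  have hmaster := mymaster (n+1) 0 (lam+1)
  simp only [add_zero, Nat.cast_zero] at hmaster
  have hprodP : ∏ i ∈ range (n+1), (lam + 1 - 1 - (i:ℝ)) = P :=
    prod_congr rfl (fun i _ => by ring)
  rw [hprodP] at hmaster
  -- peel off k = 0 in both alternating sums
  have hpeel1 := sum_range_succ' (fun k => (-1:ℝ)^k * ((n+1).choose k : ℝ) * myR (lam+1) k) (n+1)
  have hpeel2 := sum_range_succ' (fun k => (-1:ℝ)^k * ((n+1).choose k : ℝ)) (n+1)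
  simp only [pow_zero, Nat.choose_zero_right, Nat.cast_one, one_mul, mul_one] at hpeel1 hpeel2
  have hR0 : myR (lam+1) 0 = 1 := by simp [myR]
  rw [hpeel1, hR0] at hmaster
  have hS1 : ∑ m ∈ range (n+1), (-1:ℝ)^(m+1) * (((n+1).choose (m+1) : ℝ)) * myR (lam+1) (m+1)
      = (-1:ℝ)^(n+1) * P / ((n+1).factorial : ℝ) - 1 := by
    linarith [hmaster]
  have hS2 : ∑ m ∈ range (n+1), (-1:ℝ)^(m+1) * (((n+1).choose (m+1) : ℝ)) = -1 := by
    have h := alt_choose_sum n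
    rw [hpeel2] at h
    linarith
  -- rewrite each term of the RHS sum
  have hterm : ∀ m ∈ range (n+1),
      (-1 : ℝ) ^ (n - m) * (n.choose m : ℝ) * (degHarm (-lam) (m + 1) / ((m : ℝ) + 1))
      = ((-1:ℝ)^(n+1) / (lam * ((n:ℝ)+1)))
        * ((-1:ℝ)^(m+1) * (((n+1).choose (m+1) : ℝ)) * (myR (lam+1) (m+1) - 1)) := by
    intro m hm
    have hmn : m ≤ n := by have := mem_range.mp hm; omega
    have hsign : ((-1:ℝ))^(n-m) * (-1)^m = (-1)^n := by
      rw [← pow_add]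
      congr 1
      omega
    have hsq : ((-1:ℝ))^m * (-1)^m = 1 := by
      rw [← pow_add]
      exact Even.neg_one_pow ⟨m, rfl⟩
    have hsign' : ((-1:ℝ))^(n-m) = (-1)^n * (-1)^m := by
      calc ((-1:ℝ))^(n-m) = ((-1:ℝ))^(n-m) * ((-1)^m * (-1)^m) := by rw [hsq, mul_one]
        _ = ((-1:ℝ))^(n-m) * (-1)^m * (-1)^m := by ring
        _ = (-1)^n * (-1)^m := by rw [hsign]
    have hchoose : ((n:ℝ)+1) * (n.choose m : ℝ) = (((n+1).choose (m+1) : ℝ)) * ((m:ℝ)+1) := by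
      exact_mod_cast congrArg (Nat.cast (R := ℝ)) (Nat.add_one_mul_choose_eq n m)
    rw [degHarm_closed lam hlam m, hsign', pow_succ, pow_succ]
    exact aux_term _ _ _ _ _ lam _ _ hlam (by positivity) hn1 hchoose
  rw [sum_congr rfl hterm, ← mul_sum]
  have hsplit : ∑ m ∈ range (n+1),
      ((-1:ℝ)^(m+1) * (((n+1).choose (m+1) : ℝ)) * (myR (lam+1) (m+1) - 1))
      = (∑ m ∈ range (n+1), (-1:ℝ)^(m+1) * (((n+1).choose (m+1) : ℝ)) * myR (lam+1) (m+1))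
        - ∑ m ∈ range (n+1), (-1:ℝ)^(m+1) * (((n+1).choose (m+1) : ℝ)) := by
    rw [← sum_sub_distrib]
    exact sum_congr rfl (fun m _ => by ring)
  rw [hsplit, hS1, hS2]
  have hsqn : ((-1:ℝ))^(n+1) * (-1)^(n+1) = 1 := by
    rw [← pow_add]
    exact Even.neg_one_pow ⟨n+1, rfl⟩
  exact aux_fin _ _ _ _ _ hlam hn1 (hfne _) hsqn
end

section
/- Let λ be a real number with 0 < λ < 1. Then the improper integral ∫_0^∞ log_λ(1+x)/(x(1+x)) dx converges and equals ζ_{−λ}(2) = Σ_{n=1}^{∞} λ^{n−1} (1)_{n,−1/λ} / (n² (n−1)!). -/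
open Finset MeasureTheory Set Filter

namespace Stmt5Aux

/-- `dd lam n = (lam)(lam+1)⋯(lam+n-1)/n!`, the binomial series coefficients of `(1-u)^{-lam}`. -/
noncomputable def dd (lam : ℝ) (n : ℕ) : ℝ :=
  (∏ i ∈ Finset.range n, (lam + i)) / (n.factorial : ℝ)

lemma dd_zero (lam : ℝ) : dd lam 0 = 1 := by simp [dd]

lemma dd_succ (lam : ℝ) (n : ℕ) :
    dd lam (n + 1) = dd lam n * ((lam + n) / (n + 1)) := by
  have h1 : ((n.factorial : ℝ)) ≠ 0 := Nat.cast_ne_zero.2 n.factorial_ne_zero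
  have h2 : ((n : ℝ) + 1) ≠ 0 := by positivity
  simp only [dd, Finset.prod_range_succ, Nat.factorial_succ]
  push_cast
  rw [div_mul_div_comm]
  congr 1
  ring

lemma dd_nonneg {lam : ℝ} (h0 : 0 < lam) (n : ℕ) : 0 ≤ dd lam n := by
  apply div_nonneg _ (by positivity)
  exact Finset.prod_nonneg fun i _ => by positivity

lemma dd_le_one {lam : ℝ} (h0 : 0 < lam) (h1 : lam < 1) (n : ℕ) : dd lam n ≤ 1 := by
  induction n with
  | zero => simp [dd_zero]
  | succ n ih =>
    rw [dd_succ]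
    have hfrac : (lam + n) / (n + 1) ≤ 1 := by
      rw [div_le_one (by positivity)]
      linarith
    have h2 : (0:ℝ) ≤ (lam + n) / (n + 1) := by positivity
    calc dd lam n * ((lam + n) / (n + 1)) ≤ 1 * 1 :=
          mul_le_mul ih hfrac h2 zero_le_one
      _ = 1 := by ring

lemma dd_antitone {lam : ℝ} (h0 : 0 < lam) (h1 : lam < 1) (n : ℕ) :
    dd lam (n + 1) ≤ dd lam n := by
  rw [dd_succ]
  have hfrac : (lam + n) / (n + 1) ≤ 1 := by
    rw [div_le_one (by positivity)]; linarith
  calc dd lam n * ((lam + n) / (n + 1)) ≤ dd lam n * 1 :=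
        mul_le_mul_of_nonneg_left hfrac (dd_nonneg h0 n)
    _ = dd lam n := mul_one _

end Stmt5Aux

namespace Stmt5Aux

lemma hasDerivAt_one_sub_rpow {p t : ℝ} (ht : t < 1) :
    HasDerivAt (fun s : ℝ => (1 - s) ^ p) (-(p * (1 - t) ^ (p - 1))) t := by
  have h : (0:ℝ) < 1 - t := by linarith
  have h1 : HasDerivAt (fun s : ℝ => 1 - s) (-1) t := by
    simpa using (hasDerivAt_id t).const_sub 1
  have h2 : HasDerivAt (fun y : ℝ => y ^ p) (p * (1 - t) ^ (p - 1)) (1 - t) :=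
    Real.hasDerivAt_rpow_const (Or.inl h.ne')
  have := h2.comp t h1
  rw [show -(p * (1 - t) ^ (p - 1)) = p * (1 - t) ^ (p - 1) * -1 by ring]
  exact this

lemma contOn_aux {u : ℝ} (hu1 : u < 1) (N : ℕ) (p : ℝ) :
    ContinuousOn (fun t : ℝ => t ^ N * (1 - t) ^ p) (Set.uIcc 0 u) := by
  apply ContinuousOn.mul (continuous_pow N).continuousOn
  apply ContinuousOn.rpow_const (continuous_const.sub continuous_id).continuousOn
  intro t ht
  left
  have htle : t ≤ max 0 u := (Set.mem_uIcc.1 ht).elim (fun h => le_trans h.2 (le_max_right 0 u))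
    (fun h => le_trans h.2 (le_max_left 0 u))
  have : t < 1 := lt_of_le_of_lt htle (by simp [hu1, zero_lt_one, max_lt_iff])
  intro hc
  simp only [Pi.sub_apply, id_eq] at hc
  linarith

lemma ftc_base {lam u : ℝ} (hu0 : 0 ≤ u) (hu1 : u < 1) :
    (1 - u) ^ lam = 1 - lam * ∫ t in (0:ℝ)..u, (1 - t) ^ (lam - 1) := by
  have key : ∀ t ∈ Set.uIcc (0:ℝ) u, HasDerivAt (fun s : ℝ => (1 - s) ^ lam)
      (-(lam * (1 - t) ^ (lam - 1))) t := by
    intro t ht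
    rw [Set.uIcc_of_le hu0] at ht
    exact hasDerivAt_one_sub_rpow (lt_of_le_of_lt ht.2 hu1)
  have hint : IntervalIntegrable (fun t : ℝ => -(lam * (1 - t) ^ (lam - 1))) volume 0 u := by
    apply ContinuousOn.intervalIntegrable
    have := contOn_aux hu1 0 (lam - 1)
    exact (continuousOn_const.mul (by simpa using this : ContinuousOn (fun t : ℝ => (1 - t) ^ (lam - 1)) (Set.uIcc 0 u))).neg
  have heq := intervalIntegral.integral_eq_sub_of_hasDerivAt key hint
  simp only [sub_zero, Real.one_rpow] at heq
  rw [intervalIntegral.integral_neg, intervalIntegral.integral_const_mul] at heq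
  linarith [heq]

lemma ftc_step {lam u : ℝ} (hu0 : 0 ≤ u) (hu1 : u < 1) (N : ℕ) :
    (1 - u) ^ lam * u ^ (N + 1)
      = ((N:ℝ) + 1) * (∫ t in (0:ℝ)..u, t ^ N * (1 - t) ^ (lam - 1))
        - (((N:ℝ) + 1) + lam) * ∫ t in (0:ℝ)..u, t ^ (N + 1) * (1 - t) ^ (lam - 1) := by
  have key : ∀ t ∈ Set.uIcc (0:ℝ) u, HasDerivAt (fun s : ℝ => (1 - s) ^ lam * s ^ (N + 1))
      (((N:ℝ) + 1) * (t ^ N * (1 - t) ^ (lam - 1))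
        - (((N:ℝ) + 1) + lam) * (t ^ (N + 1) * (1 - t) ^ (lam - 1))) t := by
    intro t ht
    rw [Set.uIcc_of_le hu0] at ht
    have ht1 : t < 1 := lt_of_le_of_lt ht.2 hu1
    have hpos : (0:ℝ) < 1 - t := by linarith
    have hd := (hasDerivAt_one_sub_rpow (p := lam) ht1).mul (hasDerivAt_pow (N + 1) t)
    refine hd.congr_deriv ?_
    have hpow : (1 - t) ^ lam = (1 - t) ^ (lam - 1) * (1 - t) := by
      rw [Real.rpow_sub_one hpos.ne', div_mul_cancel₀ _ hpos.ne']
    rw [hpow]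
    push_cast
    ring
  have c1 : IntervalIntegrable (fun t : ℝ => t ^ N * (1 - t) ^ (lam - 1)) volume 0 u :=
    (contOn_aux hu1 N (lam - 1)).intervalIntegrable
  have c2 : IntervalIntegrable (fun t : ℝ => t ^ (N + 1) * (1 - t) ^ (lam - 1)) volume 0 u :=
    (contOn_aux hu1 (N + 1) (lam - 1)).intervalIntegrable
  have hint : IntervalIntegrable (fun t : ℝ =>
      ((N:ℝ) + 1) * (t ^ N * (1 - t) ^ (lam - 1))
        - (((N:ℝ) + 1) + lam) * (t ^ (N + 1) * (1 - t) ^ (lam - 1))) volume 0 u :=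
    (c1.const_mul _).sub (c2.const_mul _)
  have heq := intervalIntegral.integral_eq_sub_of_hasDerivAt key hint
  rw [intervalIntegral.integral_sub (c1.const_mul _) (c2.const_mul _),
    intervalIntegral.integral_const_mul, intervalIntegral.integral_const_mul] at heq
  rw [heq]
  norm_num

lemma key_identity {lam u : ℝ} (hu0 : 0 ≤ u) (hu1 : u < 1) (N : ℕ) :
    (1 - u) ^ lam * (∑ n ∈ Finset.range (N + 1), dd lam n * u ^ n)
      = 1 - (((N:ℝ) + 1) * dd lam (N + 1)) *
          ∫ t in (0:ℝ)..u, t ^ N * (1 - t) ^ (lam - 1) := by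
  induction N with
  | zero =>
    have h1 : dd lam 1 = lam := by simp [dd]
    simp only [Finset.sum_range_one, dd_zero, pow_zero, mul_one, Nat.cast_zero, zero_add, h1,
      one_mul]
    exact ftc_base hu0 hu1
  | succ N ih =>
    have hdd : ((N:ℝ) + 2) * dd lam (N + 2) = (lam + ((N:ℝ) + 1)) * dd lam (N + 1) := by
      rw [dd_succ lam (N + 1)]
      have : ((N:ℝ) + 1 + 1) ≠ 0 := by positivity
      push_cast
      field_simp
      ring
    have hstep := ftc_step (lam := lam) hu0 hu1 N
    rw [Finset.sum_range_succ, mul_add, ih]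
    push_cast
    push_cast at hdd
    linear_combination dd lam (N + 1) * hstep +
      (∫ t in (0:ℝ)..u, t ^ (N + 1) * (1 - t) ^ (lam - 1)) * hdd

end Stmt5Aux

namespace Stmt5Aux

lemma hasSum_binomial {lam u : ℝ} (h0 : 0 < lam) (h1 : lam < 1) (hu0 : 0 < u) (hu1 : u < 1) :
    HasSum (fun n => dd lam n * u ^ n) ((1 - u) ^ (-lam)) := by
  have h1u : (0:ℝ) < 1 - u := by linarith
  rw [hasSum_iff_tendsto_nat_of_nonneg
    (fun n => mul_nonneg (dd_nonneg h0 n) (by positivity)) _]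
  rw [← Filter.tendsto_add_atTop_iff_nat 1]
  have hrepr : ∀ N : ℕ, (∑ n ∈ Finset.range (N + 1), dd lam n * u ^ n)
      = (1 - u) ^ (-lam) * (1 - (((N:ℝ) + 1) * dd lam (N + 1)) *
          ∫ t in (0:ℝ)..u, t ^ N * (1 - t) ^ (lam - 1)) := by
    intro N
    rw [← key_identity hu0.le hu1 N, ← mul_assoc, ← Real.rpow_add h1u]
    simp
  have hlim : Tendsto (fun N : ℕ => (((N:ℝ) + 1) * dd lam (N + 1)) *
      ∫ t in (0:ℝ)..u, t ^ N * (1 - t) ^ (lam - 1)) atTop (nhds 0) := by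
    have hnn : ∀ N : ℕ, 0 ≤ (((N:ℝ) + 1) * dd lam (N + 1)) *
        ∫ t in (0:ℝ)..u, t ^ N * (1 - t) ^ (lam - 1) := by
      intro N
      apply mul_nonneg (mul_nonneg (by positivity) (dd_nonneg h0 _))
      apply intervalIntegral.integral_nonneg hu0.le
      intro t ht
      exact mul_nonneg (pow_nonneg ht.1 _) (Real.rpow_nonneg (by linarith [ht.2]) _)
    have hub : ∀ N : ℕ, (((N:ℝ) + 1) * dd lam (N + 1)) *
        (∫ t in (0:ℝ)..u, t ^ N * (1 - t) ^ (lam - 1))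
          ≤ ((1 - u) ^ (lam - 1) * u) * (((N:ℝ) + 1) * u ^ N) := by
      intro N
      have hIb : ‖∫ t in (0:ℝ)..u, t ^ N * (1 - t) ^ (lam - 1)‖
          ≤ (u ^ N * (1 - u) ^ (lam - 1)) * |u - 0| := by
        apply intervalIntegral.norm_integral_le_of_norm_le_const
        intro x hx
        rw [Set.uIoc_of_le hu0.le] at hx
        have hx0 : 0 < x := hx.1
        have hxu : x ≤ u := hx.2
        have hb1 : x ^ N ≤ u ^ N := pow_le_pow_left₀ hx0.le hxu N
        have hb2 : (1 - x) ^ (lam - 1) ≤ (1 - u) ^ (lam - 1) :=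
          Real.rpow_le_rpow_of_nonpos h1u (by linarith) (by linarith)
        rw [Real.norm_of_nonneg
          (mul_nonneg (pow_nonneg hx0.le _) (Real.rpow_nonneg (by linarith) _))]
        exact mul_le_mul hb1 hb2 (Real.rpow_nonneg (by linarith) _) (by positivity)
      have hI : (∫ t in (0:ℝ)..u, t ^ N * (1 - t) ^ (lam - 1))
          ≤ u ^ N * (1 - u) ^ (lam - 1) * u := by
        calc (∫ t in (0:ℝ)..u, t ^ N * (1 - t) ^ (lam - 1))
            ≤ ‖∫ t in (0:ℝ)..u, t ^ N * (1 - t) ^ (lam - 1)‖ := Real.le_norm_self _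
          _ ≤ (u ^ N * (1 - u) ^ (lam - 1)) * |u - 0| := hIb
          _ = u ^ N * (1 - u) ^ (lam - 1) * u := by
              rw [sub_zero, abs_of_pos hu0]
      have hcoef : (((N:ℝ) + 1) * dd lam (N + 1)) ≤ ((N:ℝ) + 1) :=
        mul_le_of_le_one_right (by positivity) (dd_le_one h0 h1 _)
      calc (((N:ℝ) + 1) * dd lam (N + 1)) *
          (∫ t in (0:ℝ)..u, t ^ N * (1 - t) ^ (lam - 1))
          ≤ (((N:ℝ) + 1) * dd lam (N + 1)) * (u ^ N * (1 - u) ^ (lam - 1) * u) := by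
            apply mul_le_mul_of_nonneg_left hI
              (mul_nonneg (by positivity) (dd_nonneg h0 _))
        _ ≤ (((N:ℝ) + 1)) * (u ^ N * (1 - u) ^ (lam - 1) * u) := by
            apply mul_le_mul_of_nonneg_right hcoef
            have := Real.rpow_nonneg h1u.le (lam - 1)
            positivity
        _ = ((1 - u) ^ (lam - 1) * u) * (((N:ℝ) + 1) * u ^ N) := by ring
    have hgeom : Tendsto (fun N : ℕ => ((N:ℝ) + 1) * u ^ N) atTop (nhds 0) := by
      have habs : |u| < 1 := by rw [abs_of_pos hu0]; exact hu1
      have t1 := tendsto_pow_const_mul_const_pow_of_abs_lt_one 1 habs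
      have t2 := tendsto_pow_const_mul_const_pow_of_abs_lt_one 0 habs
      have := t1.add t2
      simp only [pow_one, pow_zero, one_mul, add_zero] at this
      apply this.congr
      intro N
      ring
    have := hgeom.const_mul ((1 - u) ^ (lam - 1) * u)
    rw [mul_zero] at this
    exact squeeze_zero hnn hub this
  have hfin := ((tendsto_const_nhds (x := (1:ℝ))).sub hlim).const_mul ((1 - u) ^ (-lam))
  rw [sub_zero, mul_one] at hfin
  apply Tendsto.congr _ hfin
  intro N
  exact (hrepr N).symm

lemma summable_c {lam : ℝ} (h0 : 0 < lam) (h1 : lam < 1) :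
    Summable (fun n : ℕ => dd lam (n + 1) / (lam * ((n:ℝ) + 1))) := by
  have htel : Summable (fun n : ℕ => dd lam (n + 1) - dd lam (n + 2)) := by
    apply summable_of_sum_range_le (c := dd lam 1)
      (fun n => sub_nonneg.2 (dd_antitone h0 h1 (n + 1)))
    intro n
    rw [Finset.sum_range_sub' (f := fun i => dd lam (i + 1))]
    simp only [zero_add]
    linarith [dd_nonneg h0 (n + 1)]
  apply Summable.of_nonneg_of_le
    (fun n => div_nonneg (dd_nonneg h0 _) (by positivity)) ?_
    (htel.mul_left (2 / (lam * (1 - lam))))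
  intro n
  have hdiff : dd lam (n + 1) - dd lam (n + 2) = dd lam (n + 1) * ((1 - lam) / ((n:ℝ) + 2)) := by
    rw [dd_succ lam (n + 1)]
    push_cast
    field_simp
    ring
  rw [hdiff]
  have hl : lam ≠ 0 := h0.ne'
  have hml : (1:ℝ) - lam ≠ 0 := by linarith
  have hn2 : ((n:ℝ) + 2) ≠ 0 := by positivity
  have h2 : 2 / (lam * (1 - lam)) * (dd lam (n + 1) * ((1 - lam) / ((n:ℝ) + 2)))
      = 2 * dd lam (n + 1) / (lam * ((n:ℝ) + 2)) := by
    field_simp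
  rw [h2, div_le_div_iff₀ (by positivity) (by positivity)]
  nlinarith [mul_nonneg (mul_nonneg (dd_nonneg h0 (n + 1)) h0.le) (Nat.cast_nonneg (α := ℝ) n)]

end Stmt5Aux

namespace Stmt5Aux

lemma integral_pow_Ioo (n : ℕ) : ∫ u in Set.Ioo (0:ℝ) 1, u ^ n = ((n:ℝ) + 1)⁻¹ := by
  rw [← MeasureTheory.integral_Ioc_eq_integral_Ioo,
    ← intervalIntegral.integral_of_le zero_le_one, integral_pow]
  norm_num

lemma hInt_D {lam : ℝ} (h0 : 0 < lam) (h1 : lam < 1) :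
    IntegrableOn (fun u : ℝ => (1 - u) ^ (-lam)) (Set.Ioo 0 1) := by
  have hri : IntervalIntegrable (fun t : ℝ => t ^ (-lam)) volume 0 1 :=
    intervalIntegral.intervalIntegrable_rpow' (by linarith)
  have h2 := (hri.comp_sub_left 1).symm
  norm_num at h2
  rw [intervalIntegrable_iff_integrableOn_Ioc_of_le zero_le_one] at h2
  exact h2.mono_set Set.Ioo_subset_Ioc_self

lemma hcont_h {lam : ℝ} (h0 : 0 < lam) :
    ContinuousOn (fun u : ℝ => ((1 - u) ^ (-lam) - 1) / (lam * u)) (Set.Ioo 0 1) := by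
  apply ContinuousOn.div
  · apply ContinuousOn.sub _ continuousOn_const
    apply ContinuousOn.rpow_const (continuous_const.sub continuous_id).continuousOn
    intro u hu
    left
    simp only [Pi.sub_apply, id_eq]
    have := hu.2
    intro hc
    simp only [Set.mem_Ioo] at hu
    nlinarith [sub_eq_zero.1 hc]
  · exact (continuous_const.mul continuous_id).continuousOn
  · intro u hu
    have : 0 < u := hu.1
    positivity

lemma hInt_h {lam : ℝ} (h0 : 0 < lam) (h1 : lam < 1) :
    IntegrableOn (fun u : ℝ => ((1 - u) ^ (-lam) - 1) / (lam * u)) (Set.Ioo 0 1) := by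
  apply Integrable.mono ((hInt_D h0 h1).const_mul (1 / lam))
    ((hcont_h h0).aestronglyMeasurable measurableSet_Ioo)
  rw [ae_restrict_iff' measurableSet_Ioo]
  apply Filter.Eventually.of_forall
  intro u hu
  have hu0 : 0 < u := hu.1
  have h1u : (0:ℝ) < 1 - u := by have := hu.2; simp only [Set.mem_Ioo] at hu; linarith
  have ha0 : 0 < (1 - u) ^ (-lam) := Real.rpow_pos_of_pos h1u _
  have ha1 : 1 ≤ (1 - u) ^ (-lam) :=
    Real.one_le_rpow_of_pos_of_le_one_of_nonpos h1u (by linarith) (by linarith)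
  have hkey : (1 - u) ^ (-lam) * (1 - u) ≤ 1 := by
    have heq : (1 - u) ^ (-lam) * (1 - u) = (1 - u) ^ (-lam + 1) := by
      rw [Real.rpow_add h1u, Real.rpow_one]
    rw [heq]
    exact Real.rpow_le_one h1u.le (by linarith) (by linarith)
  have hnum : (1 - u) ^ (-lam) - 1 ≤ u * (1 - u) ^ (-lam) := by nlinarith
  have hpos : (0:ℝ) < lam * u := by positivity
  rw [Real.norm_of_nonneg (div_nonneg (by linarith) hpos.le),
    Real.norm_of_nonneg (by positivity)]
  calc ((1 - u) ^ (-lam) - 1) / (lam * u) ≤ (u * (1 - u) ^ (-lam)) / (lam * u) := by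
        gcongr
    _ = 1 / lam * (1 - u) ^ (-lam) := by
        field_simp

lemma hterm {lam : ℝ} (h0 : 0 < lam) (n : ℕ) :
    dd lam (n + 1) / (lam * ((n:ℝ) + 1))
      = lam ^ n * degFall 1 (-1 / lam) (n + 1) / (((n:ℝ) + 1) ^ 2 * (n.factorial : ℝ)) := by
  have hl : lam ≠ 0 := h0.ne'
  have hdf : degFall 1 (-1 / lam) (n + 1)
      = (∏ i ∈ Finset.range (n + 1), (lam + i)) / lam ^ (n + 1) := by
    rw [degFall]
    calc ∏ i ∈ Finset.range (n + 1), (1 - i * (-1 / lam))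
        = ∏ i ∈ Finset.range (n + 1), ((lam + i) / lam) := by
          apply Finset.prod_congr rfl
          intro i _
          field_simp
          ring
      _ = (∏ i ∈ Finset.range (n + 1), (lam + i)) / lam ^ (n + 1) := by
          rw [Finset.prod_div_distrib, Finset.prod_const, Finset.card_range]
  have hfact : (((n + 1).factorial : ℝ)) = ((n:ℝ) + 1) * (n.factorial : ℝ) := by
    rw [Nat.factorial_succ]
    push_cast
    ring
  rw [hdf, dd, hfact]
  have hfne : (n.factorial : ℝ) ≠ 0 := Nat.cast_ne_zero.2 n.factorial_ne_zero
  have hn1 : ((n:ℝ) + 1) ≠ 0 := by positivity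
  have hlp : lam ^ (n + 1) ≠ 0 := pow_ne_zero _ hl
  field_simp
  ring

end Stmt5Aux

theorem stmt_5 (lam : ℝ) (hlam0 : 0 < lam) (hlam1 : lam < 1) :
    MeasureTheory.IntegrableOn (fun x : ℝ => degLog lam (1 + x) / (x * (1 + x)))
        (Set.Ioi 0) ∧
      ∫ x in Set.Ioi (0 : ℝ), degLog lam (1 + x) / (x * (1 + x)) =
        ∑' n : ℕ, lam ^ n * degFall 1 (-1 / lam) (n + 1) /
          (((n : ℝ) + 1) ^ 2 * (n.factorial : ℝ)) := by
  have hl : lam ≠ 0 := hlam0.ne'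
  -- the substitution x = u / (1 - u)
  have himg : (fun u : ℝ => u / (1 - u)) '' Set.Ioo 0 1 = Set.Ioi 0 := by
    ext x
    simp only [Set.mem_image, Set.mem_Ioo, Set.mem_Ioi]
    constructor
    · rintro ⟨u, ⟨hu0, hu1⟩, rfl⟩
      have : (0:ℝ) < 1 - u := by linarith
      positivity
    · intro hx
      have h1x : (0:ℝ) < 1 + x := by linarith
      refine ⟨x / (1 + x), ⟨by positivity, ?_⟩, ?_⟩
      · rw [div_lt_one h1x]; linarith
      · rw [show (1:ℝ) - x / (1 + x) = 1 / (1 + x) by field_simp; ring]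
        field_simp
  have hderiv : ∀ u ∈ Set.Ioo (0:ℝ) 1,
      HasDerivWithinAt (fun u : ℝ => u / (1 - u)) (((1 - u) ^ 2)⁻¹) (Set.Ioo 0 1) u := by
    intro u hu
    have h1u : (0:ℝ) < 1 - u := by have := hu.2; simp only [Set.mem_Ioo] at hu; linarith
    have hd2 : HasDerivAt (fun y : ℝ => 1 - y) (-1) u := by
      simpa using (hasDerivAt_id u).const_sub 1
    have := (hasDerivAt_id' (𝕜 := ℝ) (x := u)).div hd2 h1u.ne'
    apply HasDerivAt.hasDerivWithinAt
    refine this.congr_deriv ?_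
    ring
  have hinj : Set.InjOn (fun u : ℝ => u / (1 - u)) (Set.Ioo 0 1) := by
    intro a ha b hb hab
    simp only [Set.mem_Ioo] at ha hb
    have h1a : (0:ℝ) < 1 - a := by linarith
    have h1b : (0:ℝ) < 1 - b := by linarith
    rw [div_eq_div_iff h1a.ne' h1b.ne'] at hab
    nlinarith
  -- the pointwise identity after substitution
  have hpt : Set.EqOn
      (fun u : ℝ => |((1 - u) ^ 2)⁻¹| •
        (degLog lam (1 + u / (1 - u)) / (u / (1 - u) * (1 + u / (1 - u)))))
      (fun u : ℝ => ((1 - u) ^ (-lam) - 1) / (lam * u)) (Set.Ioo 0 1) := by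
    intro u hu
    simp only [Set.mem_Ioo] at hu
    have hu0 : 0 < u := hu.1
    have h1u : (0:ℝ) < 1 - u := by linarith
    have h1p : (1:ℝ) + u / (1 - u) = (1 - u)⁻¹ := by field_simp; ring
    have hrp : ((1 - u)⁻¹) ^ lam = (1 - u) ^ (-lam) := by
      rw [← Real.rpow_neg_one (1 - u), ← Real.rpow_mul h1u.le]
      norm_num
    simp only [degLog, h1p, hrp, smul_eq_mul, abs_inv, abs_pow, abs_sub_comm]
    have hab : |u - 1| = 1 - u := by rw [abs_of_nonpos (by linarith)]; ring
    rw [hab]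
    have hrpne : (1 - u) ^ (-lam) ≠ 0 := (Real.rpow_pos_of_pos h1u _).ne'
    field_simp
  -- the series expansion of the substituted integrand
  have hHasSum : ∀ u ∈ Set.Ioo (0:ℝ) 1,
      HasSum (fun n : ℕ => Stmt5Aux.dd lam (n + 1) / lam * u ^ n)
        (((1 - u) ^ (-lam) - 1) / (lam * u)) := by
    intro u hu
    simp only [Set.mem_Ioo] at hu
    have hu0 : 0 < u := hu.1
    have hbin := Stmt5Aux.hasSum_binomial hlam0 hlam1 hu.1 hu.2
    have hshift := (hasSum_nat_add_iff' (f := fun n => Stmt5Aux.dd lam n * u ^ n) 1).2 hbin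
    simp only [Finset.sum_range_one, Stmt5Aux.dd_zero, pow_zero, mul_one] at hshift
    have := hshift.mul_left ((lam * u)⁻¹)
    rw [inv_mul_eq_div] at this
    have hfun : (fun n : ℕ => (lam * u)⁻¹ * (Stmt5Aux.dd lam (n + 1) * u ^ (n + 1)))
        = fun n : ℕ => Stmt5Aux.dd lam (n + 1) / lam * u ^ n := by
      funext n
      rw [pow_succ]
      field_simp
    rw [hfun] at this
    exact this
  have hFint : ∀ n : ℕ, IntegrableOn (fun u : ℝ => Stmt5Aux.dd lam (n + 1) / lam * u ^ n)
      (Set.Ioo 0 1) := fun n =>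
    ((continuous_const.mul (continuous_pow n)).integrableOn_Ioc).mono_set
      Set.Ioo_subset_Ioc_self
  have hFnorm : ∀ n : ℕ, (∫ u in Set.Ioo (0:ℝ) 1, ‖Stmt5Aux.dd lam (n + 1) / lam * u ^ n‖)
      = Stmt5Aux.dd lam (n + 1) / (lam * ((n:ℝ) + 1)) := by
    intro n
    rw [MeasureTheory.setIntegral_congr_fun measurableSet_Ioo
      (g := fun u : ℝ => Stmt5Aux.dd lam (n + 1) / lam * u ^ n)
      (fun u hu => Real.norm_of_nonneg (mul_nonneg
        (div_nonneg (Stmt5Aux.dd_nonneg hlam0 _) hlam0.le) (pow_nonneg hu.1.le n)))]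
    rw [MeasureTheory.integral_const_mul, Stmt5Aux.integral_pow_Ioo]
    rw [div_mul_eq_div_div_swap, div_div, inv_eq_one_div, div_mul_eq_div_div_swap]
    field_simp
  have hsum : Summable
      (fun n : ℕ => ∫ u in Set.Ioo (0:ℝ) 1, ‖Stmt5Aux.dd lam (n + 1) / lam * u ^ n‖) :=
    (Stmt5Aux.summable_c hlam0 hlam1).congr fun n => (hFnorm n).symm
  have hIntH := Stmt5Aux.hInt_h hlam0 hlam1
  constructor
  · rw [← himg,
      integrableOn_image_iff_integrableOn_abs_deriv_smul measurableSet_Ioo hderiv hinj]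
    exact hIntH.congr_fun (fun u hu => (hpt hu).symm) measurableSet_Ioo
  · rw [← himg, integral_image_eq_integral_abs_deriv_smul measurableSet_Ioo hderiv hinj]
    have e1 : ∫ u in Set.Ioo (0:ℝ) 1, |((1 - u) ^ 2)⁻¹| •
        (degLog lam (1 + u / (1 - u)) / (u / (1 - u) * (1 + u / (1 - u))))
        = ∫ u in Set.Ioo (0:ℝ) 1, ((1 - u) ^ (-lam) - 1) / (lam * u) :=
      MeasureTheory.setIntegral_congr_fun measurableSet_Ioo hpt
    rw [e1]
    have e2 : ∫ u in Set.Ioo (0:ℝ) 1, ((1 - u) ^ (-lam) - 1) / (lam * u)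
        = ∫ u in Set.Ioo (0:ℝ) 1, ∑' n : ℕ, Stmt5Aux.dd lam (n + 1) / lam * u ^ n :=
      MeasureTheory.setIntegral_congr_fun measurableSet_Ioo
        (fun u hu => ((hHasSum u hu).tsum_eq).symm)
    rw [e2, ← MeasureTheory.integral_tsum_of_summable_integral_norm hFint hsum]
    apply tsum_congr
    intro n
    rw [MeasureTheory.integral_const_mul, Stmt5Aux.integral_pow_Ioo,
      ← Stmt5Aux.hterm hlam0 n]
    rw [div_mul_eq_div_div_swap, div_div, inv_eq_one_div, div_mul_eq_div_div_swap]
    field_simp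
end

section
/- Let λ be a nonzero real number, α a positive integer, and t a real number with |t| < 1. Then the series Σ_{n=1}^{∞} H_{n,λ}(α) t^n converges and Σ_{n=1}^{∞} H_{n,λ}(α) t^n = Li_{α,λ}(t)/(1−t). -/
open Finset

noncomputable def aCoef (lam : ℝ) (α k : ℕ) : ℝ :=
  (-lam) ^ (k - 1) * degFall 1 (1 / lam) k / ((k : ℝ) ^ α * ((k - 1).factorial : ℝ))

noncomputable def bBnd (lam : ℝ) (k : ℕ) : ℝ :=
  ∏ i ∈ Finset.range k, (1 + |lam| / (i + 1))

lemma aCoef_zero (lam : ℝ) (α : ℕ) (hα : 1 ≤ α) : aCoef lam α 0 = 0 := by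
  have : ((0:ℕ):ℝ) ^ α = 0 := by
    simp [zero_pow (by omega : α ≠ 0)]
  simp only [aCoef, this, zero_mul, div_zero]

lemma degHarmOrd_eq (lam : ℝ) (α : ℕ) (hα : 1 ≤ α) (n : ℕ) :
    degHarmOrd lam α n = ∑ k ∈ Finset.range (n + 1), aCoef lam α k := by
  have h : Finset.range (n + 1) = insert 0 (Finset.Icc 1 n) := by
    ext m; simp [Finset.mem_range, Finset.mem_Icc]; omega
  rw [h, Finset.sum_insert (by simp), aCoef_zero lam α hα, zero_add]
  rfl

lemma bBnd_pos (lam : ℝ) (k : ℕ) : 0 < bBnd lam k := by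
  apply Finset.prod_pos
  intro i _
  positivity

lemma abs_aCoef_le (lam : ℝ) (hlam : lam ≠ 0) (α : ℕ) (hα : 1 ≤ α) (k : ℕ) :
    |aCoef lam α k| ≤ bBnd lam k := by
  cases k with
  | zero => rw [aCoef_zero lam α hα]; simpa using (bBnd_pos lam 0).le
  | succ m =>
    have hb : bBnd lam m ≤ bBnd lam (m + 1) := by
      unfold bBnd
      rw [Finset.prod_range_succ]
      nth_rewrite 1 [← mul_one (∏ i ∈ Finset.range m, (1 + |lam| / (↑i + 1)))]
      apply mul_le_mul_of_nonneg_left _ (bBnd_pos lam m).le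
      have : (0:ℝ) ≤ |lam| / (m + 1) := by positivity
      linarith
    refine le_trans ?_ hb
    have hnum : |(-lam) ^ m * degFall 1 (1 / lam) (m + 1)| =
        ∏ i ∈ Finset.range m, |(i : ℝ) + 1 - lam| := by
      rw [degFall, Finset.prod_range_succ']
      push_cast
      simp only [zero_mul, sub_zero, mul_one]
      have h1 : (-lam) ^ m * ∏ i ∈ Finset.range m, (1 - ((i:ℝ) + 1) * (1 / lam)) =
          ∏ i ∈ Finset.range m, ((-lam) * (1 - ((i:ℝ) + 1) * (1 / lam))) := by
        rw [Finset.prod_mul_distrib, Finset.prod_const, Finset.card_range]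
      rw [h1, Finset.abs_prod]
      apply Finset.prod_congr rfl
      intro i _
      congr 1
      field_simp
      ring
    have hfac : ((m.factorial : ℝ)) = ∏ i ∈ Finset.range m, ((i:ℝ) + 1) := by
      rw [← Finset.prod_range_add_one_eq_factorial]
      push_cast
      rfl
    have hval : |aCoef lam α (m + 1)| =
        (∏ i ∈ Finset.range m, |(i : ℝ) + 1 - lam|) /
          ((((m:ℝ) + 1)) ^ α * (m.factorial : ℝ)) := by
      rw [aCoef]
      simp only [Nat.add_sub_cancel]
      rw [abs_div, hnum]
      congr 1
      rw [abs_of_nonneg]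
      · push_cast; ring
      · positivity
    rw [hval]
    have hden_pos : (0:ℝ) < ∏ i ∈ Finset.range m, ((i:ℝ) + 1) := by
      apply Finset.prod_pos; intro i _; positivity
    have hstep : (∏ i ∈ Finset.range m, |(i : ℝ) + 1 - lam|) /
          ((((m:ℝ) + 1)) ^ α * (m.factorial : ℝ)) ≤
        (∏ i ∈ Finset.range m, ((i:ℝ) + 1 + |lam|)) /
          (∏ i ∈ Finset.range m, ((i:ℝ) + 1)) := by
      apply div_le_div₀
      · apply Finset.prod_nonneg; intro i _; positivity
      · apply Finset.prod_le_prod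
        · intro i _; positivity
        · intro i _
          calc |(i : ℝ) + 1 - lam| ≤ |(i:ℝ) + 1| + |lam| := abs_sub _ _
            _ = (i:ℝ) + 1 + |lam| := by rw [abs_of_nonneg]; positivity
      · exact hden_pos
      · rw [hfac]
        nth_rewrite 1 [← one_mul (∏ i ∈ Finset.range m, ((i:ℝ) + 1))]
        apply mul_le_mul_of_nonneg_right _ hden_pos.le
        exact one_le_pow₀ (le_add_of_nonneg_left (Nat.cast_nonneg m))
    refine hstep.trans ?_
    rw [← Finset.prod_div_distrib, bBnd]
    apply le_of_eq
    apply Finset.prod_congr rfl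
    intro i _
    rw [add_div, div_self (by positivity)]

theorem stmt_6 (lam : ℝ) (hlam : lam ≠ 0) (α : ℕ) (hα : 1 ≤ α) (t : ℝ) (ht : |t| < 1) :
    HasSum (fun n : ℕ => degHarmOrd lam α n * t ^ n)
      (degPolylog α lam t / (1 - t)) := by
  set f : ℕ → ℝ := fun k => aCoef lam α k * t ^ k with hfdef
  set g : ℕ → ℝ := fun k => t ^ k with hgdef
  have hgn : Summable fun k => ‖g k‖ := by
    simpa [hgdef, norm_pow, Real.norm_eq_abs] using
      summable_geometric_of_lt_one (abs_nonneg t) ht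
  have hfn : Summable fun k => ‖f k‖ := by
    have hsum : Summable fun k : ℕ => bBnd lam k * |t| ^ k := by
      refine summable_of_ratio_norm_eventually_le (r := (1 + |t|) / 2) (by linarith) ?_
      have htend : Filter.Tendsto (fun k : ℕ => (1 + |lam| / ((k:ℝ) + 1)) * |t|)
          Filter.atTop (nhds ((1 + 0) * |t|)) := by
        apply Filter.Tendsto.mul_const
        apply Filter.Tendsto.const_add
        apply Filter.Tendsto.div_atTop tendsto_const_nhds
        exact Filter.tendsto_atTop_add_const_right _ 1 tendsto_natCast_atTop_atTop
      have hlt : (1 + 0) * |t| < (1 + |t|) / 2 := by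
        rw [add_zero, one_mul]
        linarith
      filter_upwards [htend.eventually_le_const hlt] with k hk
      have hb1 : bBnd lam (k + 1) = bBnd lam k * (1 + |lam| / ((k:ℝ) + 1)) := by
        unfold bBnd; rw [Finset.prod_range_succ]
      rw [Real.norm_eq_abs, Real.norm_eq_abs,
        abs_of_nonneg (mul_nonneg (bBnd_pos lam _).le (by positivity) : (0:ℝ) ≤ bBnd lam (k+1) * |t| ^ (k+1)),
        abs_of_nonneg (mul_nonneg (bBnd_pos lam _).le (by positivity) : (0:ℝ) ≤ bBnd lam k * |t| ^ k), hb1, pow_succ]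
      calc bBnd lam k * (1 + |lam| / ((k:ℝ) + 1)) * (|t| ^ k * |t|)
          = (bBnd lam k * |t| ^ k) * ((1 + |lam| / ((k:ℝ) + 1)) * |t|) := by ring
        _ ≤ (bBnd lam k * |t| ^ k) * ((1 + |t|) / 2) := by
            apply mul_le_mul_of_nonneg_left hk (mul_nonneg (bBnd_pos lam _).le (by positivity))
        _ = (1 + |t|) / 2 * (bBnd lam k * |t| ^ k) := by ring
    apply Summable.of_nonneg_of_le (fun k => norm_nonneg _) _ hsum
    intro k
    rw [Real.norm_eq_abs, hfdef, abs_mul, abs_pow]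
    exact mul_le_mul_of_nonneg_right (abs_aCoef_le lam hlam α hα k) (by positivity)
  have hmain := hasSum_sum_range_mul_of_summable_norm hfn hgn
  have hterm : ∀ n, (∑ k ∈ Finset.range (n + 1), f k * g (n - k)) =
      degHarmOrd lam α n * t ^ n := by
    intro n
    rw [degHarmOrd_eq lam α hα n, Finset.sum_mul]
    apply Finset.sum_congr rfl
    intro k hk
    simp only [hfdef, hgdef]
    rw [mul_assoc, ← pow_add]
    congr 2
    have := Finset.mem_range.mp hk
    omega
  have hS : (∑' n, f n) = degPolylog α lam t := by
    rw [Summable.tsum_eq_zero_add hfn.of_norm]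
    simp only [hfdef]
    rw [aCoef_zero lam α hα, zero_mul, zero_add, degPolylog]
    apply tsum_congr
    intro n
    simp only [aCoef, Nat.add_sub_cancel]
    push_cast
    ring
  have hG : (∑' n, g n) = (1 - t)⁻¹ := (hasSum_geometric_of_abs_lt_one ht).tsum_eq
  rw [hS, hG] at hmain
  simp only [hterm] at hmain
  rw [div_eq_mul_inv]
  exact hmain
end

section
/- Let λ be a nonzero real number and let t be a real number with |t| < 1/2. Then Li_{2,λ}(t/(1+t)) = Σ_{n=1}^{∞} (−1)^{n−1} (H_{n,−λ}/n) t^n, where both series converge. -/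
open Finset

lemma degFall_succ (x lam : ℝ) (n : ℕ) :
    degFall x lam (n+1) = degFall x lam n * (x - n*lam) := Finset.prod_range_succ _ _

lemma degFall_add_one (x : ℝ) (n : ℕ) :
    degFall (x+1) 1 (n+1) = degFall x 1 n * (x+1) := by
  unfold degFall
  rw [Finset.prod_range_succ']
  simp only [Nat.cast_zero, zero_mul, sub_zero, mul_one]
  congr 1
  refine Finset.prod_congr rfl fun i _ => ?_
  push_cast; ring

/-- real binomial coefficient -/
noncomputable def Rch (x : ℝ) (n : ℕ) : ℝ := degFall x 1 n / n.factorial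

lemma Rch_zero (x : ℝ) : Rch x 0 = 1 := by simp [Rch, degFall]

lemma Rch_pascal (x : ℝ) (n : ℕ) :
    Rch (x+1) (n+1) = Rch x (n+1) + Rch x n := by
  unfold Rch
  rw [degFall_add_one, degFall_succ]
  have h1 : ((n+1).factorial : ℝ) = (n.factorial : ℝ) * ((n:ℝ)+1) := by
    push_cast [Nat.factorial_succ]; ring
  have h2 : (n.factorial : ℝ) ≠ 0 := Nat.cast_ne_zero.mpr n.factorial_ne_zero
  have h3 : ((n:ℝ)+1) ≠ 0 := by positivity
  rw [h1]
  field_simp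
  ring

lemma vand (x : ℝ) : ∀ N : ℕ, ∀ m : ℕ,
    ∑ j ∈ Finset.range (N+1), (N.choose j : ℝ) * Rch x (j+m) = Rch (x + N) (N+m) := by
  intro N
  induction N with
  | zero => intro m; simp
  | succ N ih =>
    intro m
    rw [Finset.sum_range_succ']
    have key : ∀ j : ℕ, (((N+1).choose (j+1) : ℕ) : ℝ) = N.choose j + N.choose (j+1) := by
      intro j
      rw [Nat.choose_succ_succ]
      push_cast; ring
    have e1 : ∑ i ∈ Finset.range (N+1), ((N+1).choose (i+1) : ℝ) * Rch x (i+1+m)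
        = (∑ i ∈ Finset.range (N+1), (N.choose i : ℝ) * Rch x (i+(m+1)))
          + ∑ i ∈ Finset.range (N+1), (N.choose (i+1) : ℝ) * Rch x (i+1+m) := by
      rw [← Finset.sum_add_distrib]
      refine Finset.sum_congr rfl fun i _ => ?_
      rw [key i]
      have : i+1+m = i+(m+1) := by omega
      rw [this]; ring
    rw [e1]
    have e2 : ∑ j ∈ Finset.range (N+2), (N.choose j : ℝ) * Rch x (j+m)
        = (∑ i ∈ Finset.range (N+1), (N.choose (i+1) : ℝ) * Rch x (i+1+m))
          + (N.choose 0 : ℝ) * Rch x (0+m) := Finset.sum_range_succ' _ _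
    have e3 : ∑ j ∈ Finset.range (N+2), (N.choose j : ℝ) * Rch x (j+m)
        = ∑ j ∈ Finset.range (N+1), (N.choose j : ℝ) * Rch x (j+m) := by
      rw [Finset.sum_range_succ]
      simp [Nat.choose_succ_self]
    rw [add_assoc,
      show (((N+1).choose 0 : ℕ) : ℝ) * Rch x (0+m) = (N.choose 0 : ℝ) * Rch x (0+m) by simp,
      ← e2, e3, ih m, ih (m+1)]
    rw [show N+1+m = N+m+1 by omega,
      show ((N+1:ℕ):ℝ) = (N:ℝ)+1 by push_cast; ring, show x + ((N:ℝ)+1) = (x + (N:ℝ)) + 1 by ring, Rch_pascal]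
    rfl

lemma Rch_shift (x : ℝ) (N : ℕ) :
    Rch (x + N) N = (∏ i ∈ Finset.range N, (x + i + 1)) / N.factorial := by
  unfold Rch degFall
  congr 1
  rw [← Finset.prod_range_reflect (fun i => x + i + 1) N]
  refine Finset.prod_congr rfl fun i hi => ?_
  simp only [Finset.mem_range] at hi
  have h : N - 1 - i = N - (i+1) := by omega
  rw [h, Nat.cast_sub (by omega)]
  push_cast; ring

lemma telescope (x : ℝ) : ∀ N : ℕ,
    ∑ j ∈ Finset.Icc 1 N, degFall x (-1) j / (j.factorial : ℝ)
      = (∏ i ∈ Finset.range N, (x + i + 1)) / N.factorial - 1 := by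
  intro N
  induction N with
  | zero => simp
  | succ N ih =>
    rw [Finset.sum_Icc_succ_top (by omega), ih]
    have hP : degFall x (-1) (N+1) = x * ∏ i ∈ Finset.range N, (x + i + 1) := by
      unfold degFall
      rw [Finset.prod_range_succ']
      simp only [Nat.cast_zero, zero_mul, sub_zero]
      rw [mul_comm]
      congr 1
      refine Finset.prod_congr rfl fun i _ => ?_
      push_cast; ring
    rw [hP, Finset.prod_range_succ]
    have h1 : ((N+1).factorial : ℝ) = (N.factorial : ℝ) * ((N:ℝ)+1) := by
      push_cast [Nat.factorial_succ]; ring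
    have h2 : (N.factorial : ℝ) ≠ 0 := Nat.cast_ne_zero.mpr N.factorial_ne_zero
    have h3 : ((N:ℝ)+1) ≠ 0 := by positivity
    rw [h1]
    field_simp
    ring

lemma lam_pow_degFall {lam : ℝ} (hlam : lam ≠ 0) (k : ℕ) :
    lam ^ k * degFall 1 (1/lam) (k+1) = degFall lam 1 (k+1) / lam := by
  rw [eq_div_iff hlam]
  have h : lam ^ k * degFall 1 (1/lam) (k+1) * lam = lam^(k+1) * degFall 1 (1/lam) (k+1) := by
    ring
  rw [h, show lam^(k+1) = ∏ _i ∈ Finset.range (k+1), lam by simp, degFall, degFall,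
    ← Finset.prod_mul_distrib]
  refine Finset.prod_congr rfl fun i _ => ?_
  field_simp

lemma lam_pow_degFall' {lam : ℝ} (hlam : lam ≠ 0) (k : ℕ) :
    lam ^ k * degFall 1 (1/(-lam)) (k+1) = degFall lam (-1) (k+1) / lam := by
  rw [eq_div_iff hlam]
  have h : lam ^ k * degFall 1 (1/(-lam)) (k+1) * lam = lam^(k+1) * degFall 1 (1/(-lam)) (k+1) := by
    ring
  rw [h, show lam^(k+1) = ∏ _i ∈ Finset.range (k+1), lam by simp, degFall, degFall,
    ← Finset.prod_mul_distrib]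
  refine Finset.prod_congr rfl fun i _ => ?_
  have h2 : (1:ℝ) - (i:ℝ) * (1 / -lam) = 1 + (i:ℝ) * (1/lam) := by rw [div_neg]; ring
  rw [h2]
  field_simp
  ring

lemma key_identity {lam : ℝ} (hlam : lam ≠ 0) (n : ℕ) :
    ∑ k ∈ Finset.range (n+1),
      (n.choose k : ℝ) * (lam ^ k * degFall 1 (1/lam) (k+1)) /
        ((k.factorial : ℝ) * ((k:ℝ)+1)^2)
      = degHarm (-lam) (n+1) / ((n:ℝ)+1) := by
  have hn1 : ((n:ℝ)+1) ≠ 0 := by positivity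
  have hc : lam * ((n:ℝ)+1) ≠ 0 := mul_ne_zero hlam hn1
  apply mul_right_cancel₀ hc
  -- LHS * (lam * (n+1))
  have hL : (∑ k ∈ Finset.range (n+1),
      (n.choose k : ℝ) * (lam ^ k * degFall 1 (1/lam) (k+1)) /
        ((k.factorial : ℝ) * ((k:ℝ)+1)^2)) * (lam * ((n:ℝ)+1))
      = ∑ k ∈ Finset.range (n+1), ((n+1).choose (k+1) : ℝ) * Rch lam (k+1) := by
    rw [Finset.sum_mul]
    refine Finset.sum_congr rfl fun k _ => ?_
    rw [lam_pow_degFall hlam]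
    have hch : ((n:ℝ)+1) * (n.choose k : ℝ) = ((n+1).choose (k+1) : ℝ) * ((k:ℝ)+1) := by
      have := Nat.add_one_mul_choose_eq n k
      have h2 : (((n+1) * n.choose k : ℕ) : ℝ) = (((n+1).choose (k+1) * (k+1) : ℕ) : ℝ) := by
        exact_mod_cast congrArg (Nat.cast : ℕ → ℝ) this
      push_cast at h2
      linarith
    have hfac : (k.factorial : ℝ) ≠ 0 := Nat.cast_ne_zero.mpr k.factorial_ne_zero
    have hk1 : ((k:ℝ)+1) ≠ 0 := by positivity
    have hfs : ((k+1).factorial : ℝ) = (k.factorial : ℝ) * ((k:ℝ)+1) := by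
      push_cast [Nat.factorial_succ]; ring
    unfold Rch
    rw [hfs]
    field_simp
    linear_combination degFall lam 1 (k+1) * hch
  rw [hL]
  -- sum over range (n+2)
  have e2 : ∑ j ∈ Finset.range (n+2), ((n+1).choose j : ℝ) * Rch lam j
      = (∑ k ∈ Finset.range (n+1), ((n+1).choose (k+1) : ℝ) * Rch lam (k+1))
        + ((n+1).choose 0 : ℝ) * Rch lam 0 := Finset.sum_range_succ' _ _
  have e3 : ∑ k ∈ Finset.range (n+1), ((n+1).choose (k+1) : ℝ) * Rch lam (k+1)
      = Rch (lam + (n+1:ℕ)) (n+1) - 1 := by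
    have hv := vand lam (n+1) 0
    simp only [Nat.add_zero] at hv
    have : ∑ j ∈ Finset.range (n+2), ((n+1).choose j : ℝ) * Rch lam (j+0)
        = Rch (lam + ((n+1:ℕ):ℝ)) (n+1) := hv
    simp only [Nat.add_zero] at this
    rw [e2] at this
    rw [Rch_zero] at this
    simp only [Nat.choose_zero_right, Nat.cast_one, one_mul] at this
    linarith
  rw [e3]
  -- RHS
  have hR : degHarm (-lam) (n+1) / ((n:ℝ)+1) * (lam * ((n:ℝ)+1))
      = lam * degHarm (-lam) (n+1) := by field_simp
  rw [hR]
  have hH : lam * degHarm (-lam) (n+1)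
      = ∑ j ∈ Finset.Icc 1 (n+1), degFall lam (-1) j / (j.factorial : ℝ) := by
    unfold degHarm
    rw [Finset.mul_sum]
    refine Finset.sum_congr rfl fun j hj => ?_
    simp only [Finset.mem_Icc] at hj
    obtain ⟨j', rfl⟩ : ∃ j', j = j' + 1 := ⟨j - 1, by omega⟩
    simp only [neg_neg, Nat.add_sub_cancel]
    have hd := lam_pow_degFall' hlam j'
    have hfac : (((j'+1).factorial : ℕ) : ℝ) ≠ 0 := Nat.cast_ne_zero.mpr (Nat.factorial_ne_zero _)
    rw [show lam * (lam ^ j' * degFall 1 (1 / -lam) (j' + 1) / (((j'+1).factorial : ℕ):ℝ))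
        = (lam ^ j' * degFall 1 (1/(-lam)) (j'+1)) * lam / (((j'+1).factorial : ℕ):ℝ) by ring,
      hd]
    field_simp
  rw [hH, telescope lam (n+1), Rch_shift lam (n+1)]

noncomputable def Acoef (lam t : ℝ) (k : ℕ) : ℝ :=
  (-lam)^k * degFall 1 (1/lam) (k+1) * t^(k+1) / ((k.factorial:ℝ) * ((k:ℝ)+1)^2)

noncomputable def fterm (lam t : ℝ) (p : ℕ × ℕ) : ℝ :=
  Acoef lam t p.1 * (((p.2 + p.1).choose p.1 : ℕ) : ℝ) * (-t)^p.2

lemma Acoef_succ {lam : ℝ} (hlam : lam ≠ 0) (t : ℝ) (k : ℕ) :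
    Acoef lam t (k+1) = Acoef lam t k *
      ((((k:ℝ)+1-lam) * t * ((k:ℝ)+1)) / ((k:ℝ)+2)^2) := by
  unfold Acoef
  rw [show k+1+1 = (k+1)+1 from rfl, degFall_succ]
  have hfs : ((k+1).factorial : ℝ) = (k.factorial:ℝ) * ((k:ℝ)+1) := by
    push_cast [Nat.factorial_succ]; ring
  have hfac : (k.factorial : ℝ) ≠ 0 := Nat.cast_ne_zero.mpr k.factorial_ne_zero
  have hk1 : ((k:ℝ)+1) ≠ 0 := by positivity
  have hk2 : ((k:ℝ)+2) ≠ 0 := by positivity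
  rw [hfs]
  push_cast
  field_simp
  ring

lemma hasSum_abs_row (lam t : ℝ) (habs : |t| < 1) (k : ℕ) :
    HasSum (fun m => |fterm lam t (k, m)|)
      (|Acoef lam t k| * (1/(1-|t|)^(k+1))) := by
  have hr : ‖|t|‖ < 1 := by rwa [Real.norm_eq_abs, abs_abs]
  have h := (hasSum_choose_mul_geometric_of_norm_lt_one k hr).mul_left (|Acoef lam t k|)
  refine h.congr_fun fun m => ?_
  unfold fterm
  simp only
  rw [abs_mul, abs_mul, abs_pow, abs_neg]
  rw [abs_of_nonneg (by positivity : (0:ℝ) ≤ (((m + k).choose k : ℕ) : ℝ))]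
  ring

lemma summable_B {lam t : ℝ} (hlam : lam ≠ 0) (ht : |t| < 1/2) :
    Summable (fun k => |Acoef lam t k| * (1/(1-|t|)^(k+1))) := by
  set u := |t| with hu
  have hu0 : 0 ≤ u := abs_nonneg t
  have hu2 : u < 1/2 := ht
  have hv : (0:ℝ) < 1 - u := by linarith
  set r' : ℝ := 1/(2*(1-u)) with hr'
  have hr'1 : r' < 1 := by
    rw [hr', div_lt_one (by linarith)]
    linarith
  apply summable_of_ratio_norm_eventually_le hr'1
  have hK : ∃ K : ℕ, ∀ k : ℕ, K ≤ k → 2*|lam| ≤ (1-2*u)*k := by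
    refine ⟨⌈2*|lam|/(1-2*u)⌉₊, fun k hk => ?_⟩
    have h1 : 2*|lam|/(1-2*u) ≤ (k:ℝ) := le_trans (Nat.le_ceil _) (by exact_mod_cast hk)
    have h2 : 0 < 1-2*u := by linarith
    calc 2*|lam| = (2*|lam|/(1-2*u)) * (1-2*u) := by field_simp
    _ ≤ (k:ℝ) * (1-2*u) := by nlinarith
    _ = (1-2*u)*k := by ring
  obtain ⟨K, hKp⟩ := hK
  filter_upwards [Filter.eventually_ge_atTop K] with k hk
  have hlamk := hKp k hk
  have hk0 : (0:ℝ) ≤ (k:ℝ) := Nat.cast_nonneg k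
  have hP : (0:ℝ) < (1-u)^(k+1) := by positivity
  have hQ : (0:ℝ) < ((k:ℝ)+2)^2 := by positivity
  -- rewrite norms
  rw [Real.norm_eq_abs, Real.norm_eq_abs,
    abs_of_nonneg (by positivity : (0:ℝ) ≤ |Acoef lam t (k+1)| * (1/(1-u)^(k+1+1))),
    abs_of_nonneg (by positivity : (0:ℝ) ≤ |Acoef lam t k| * (1/(1-u)^(k+1)))]
  have hstep : |Acoef lam t (k+1)|
      = |Acoef lam t k| * (|(k:ℝ)+1-lam| * u * ((k:ℝ)+1) / ((k:ℝ)+2)^2) := by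
    rw [Acoef_succ hlam, abs_mul]
    congr 1
    rw [abs_div, abs_mul, abs_mul, hu]
    congr 2
    · rw [abs_of_nonneg (by positivity : (0:ℝ) ≤ (k:ℝ)+1)]
    · rw [abs_of_nonneg hQ.le]
  rw [hstep]
  have htri : |(k:ℝ)+1-lam| ≤ (k:ℝ)+1+|lam| := by
    calc |(k:ℝ)+1-lam| ≤ |(k:ℝ)+1| + |lam| := abs_sub _ _
    _ = (k:ℝ)+1+|lam| := by rw [abs_of_nonneg (by positivity : (0:ℝ) ≤ (k:ℝ)+1)]
  have hkey : |(k:ℝ)+1-lam| * u * ((k:ℝ)+1) ≤ (((k:ℝ)+2)^2)/2 := by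
    have h1 : |(k:ℝ)+1-lam| * u * ((k:ℝ)+1) ≤ ((k:ℝ)+1+|lam|) * u * ((k:ℝ)+1) := by
      have := mul_le_mul_of_nonneg_right htri (mul_nonneg hu0 (by positivity : (0:ℝ) ≤ (k:ℝ)+1))
      nlinarith [this]
    have h2 : ((k:ℝ)+1+|lam|) * u * ((k:ℝ)+1) ≤ (((k:ℝ)+2)^2)/2 := by
      nlinarith [mul_le_mul_of_nonneg_right hlamk (mul_nonneg hu0 (by positivity : (0:ℝ) ≤ (k:ℝ)+1)),
        mul_nonneg (mul_nonneg hu0 hk0) hk0, sq_nonneg ((k:ℝ)+1),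
        mul_nonneg (abs_nonneg lam) hk0, mul_nonneg hu0 hk0,
        mul_nonneg (mul_nonneg hu0 (abs_nonneg lam)) hk0]
    linarith
  -- final inequality
  have hB0 : (0:ℝ) ≤ |Acoef lam t k| := abs_nonneg _
  rw [pow_succ (1-u) (k+1)]
  have expand : |Acoef lam t k| * (|(k:ℝ)+1-lam| * u * ((k:ℝ)+1) / ((k:ℝ)+2)^2) *
      (1/((1-u)^(k+1) * (1-u)))
      = (|Acoef lam t k| * (1/(1-u)^(k+1))) *
        ((|(k:ℝ)+1-lam| * u * ((k:ℝ)+1)) / (((k:ℝ)+2)^2 * (1-u))) := by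
    field_simp
  rw [expand]
  rw [mul_comm r' _]
  apply mul_le_mul_of_nonneg_left _ (by positivity)
  rw [div_le_iff₀ (by positivity), hr']
  have : 1 / (2 * (1 - u)) * (((k:ℝ) + 2) ^ 2 * (1 - u)) = ((k:ℝ)+2)^2/2 := by
    field_simp
  rw [this]
  exact hkey

lemma summable_fterm {lam t : ℝ} (hlam : lam ≠ 0) (ht : |t| < 1/2) :
    Summable (fterm lam t) := by
  have habs : |t| < 1 := lt_trans ht (by norm_num)
  have hsum : Summable (fun p : ℕ × ℕ => |fterm lam t p|) := by
    rw [summable_prod_of_nonneg (fun p => abs_nonneg _)]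
    constructor
    · intro k
      exact (hasSum_abs_row lam t habs k).summable
    · have : (fun k => ∑' m, |fterm lam t (k, m)|)
          = fun k => |Acoef lam t k| * (1/(1-|t|)^(k+1)) := by
        funext k
        exact (hasSum_abs_row lam t habs k).tsum_eq
      rw [this]
      exact summable_B hlam ht
  exact hsum.of_abs

theorem stmt_7 (lam : ℝ) (hlam : lam ≠ 0) (t : ℝ) (ht : |t| < 1 / 2) :
    ∃ S : ℝ,
      HasSum (fun n : ℕ =>
        (-lam) ^ n * degFall 1 (1 / lam) (n + 1) * (t / (1 + t)) ^ (n + 1) /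
          ((n.factorial : ℝ) * ((n : ℝ) + 1) ^ 2)) S ∧
      HasSum (fun n : ℕ =>
        (-1 : ℝ) ^ n * (degHarm (-lam) (n + 1) / ((n : ℝ) + 1)) * t ^ (n + 1)) S := by
  obtain ⟨ht1, ht2⟩ := abs_lt.mp ht
  have h1t : (0:ℝ) < 1 + t := by linarith
  have habs : |t| < 1 := lt_trans ht (by norm_num)
  have hS : HasSum (fterm lam t) (∑' p, fterm lam t p) :=
    (summable_fterm hlam ht).hasSum
  set S := ∑' p, fterm lam t p with hSdef
  refine ⟨S, ?_, ?_⟩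
  · -- first sum: fiberwise over rows
    apply HasSum.prod_fiberwise hS
    intro k
    have hnt : ‖-t‖ < 1 := by rw [norm_neg, Real.norm_eq_abs]; exact habs
    have h := (hasSum_choose_mul_geometric_of_norm_lt_one k hnt).mul_left (Acoef lam t k)
    have hval : Acoef lam t k * (1/(1-(-t))^(k+1))
        = (-lam) ^ k * degFall 1 (1 / lam) (k + 1) * (t / (1 + t)) ^ (k + 1) /
          ((k.factorial : ℝ) * ((k : ℝ) + 1) ^ 2) := by
      rw [sub_neg_eq_add]
      unfold Acoef
      rw [div_pow]
      have h1 : (1+t) ≠ 0 := ne_of_gt h1t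
      have h2 : (k.factorial : ℝ) ≠ 0 := Nat.cast_ne_zero.mpr k.factorial_ne_zero
      have h3 : ((k:ℝ)+1) ≠ 0 := by positivity
      field_simp
    rw [hval] at h
    refine h.congr_fun fun m => ?_
    unfold fterm
    simp only
    ring
  · -- second sum: antidiagonal grouping
    have h1 : HasSum (fun x : Σ n : ℕ, {p : ℕ × ℕ // p ∈ Finset.HasAntidiagonal.antidiagonal n} =>
        fterm lam t (x.2 : ℕ × ℕ)) S :=
      (Finset.HasAntidiagonal.sigmaAntidiagonalEquivProd (A := ℕ)).hasSum_iff.mpr hS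
    have hdiag : HasSum (fun n => ∑ p ∈ Finset.HasAntidiagonal.antidiagonal n, fterm lam t p) S := by
      refine h1.sigma fun n => ?_
      have := hasSum_fintype (fun c : {p : ℕ × ℕ // p ∈ Finset.HasAntidiagonal.antidiagonal n} =>
        fterm lam t (c : ℕ × ℕ))
      rwa [Finset.sum_coe_sort] at this
    have hdiagval : ∀ n : ℕ, ∑ p ∈ Finset.HasAntidiagonal.antidiagonal n, fterm lam t p
        = (-1:ℝ)^n * (degHarm (-lam) (n+1) / ((n:ℝ)+1)) * t^(n+1) := by
      intro n
      rw [Finset.Nat.sum_antidiagonal_eq_sum_range_succ_mk]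
      have step : ∀ k ∈ Finset.range (n+1), fterm lam t (k, n-k)
          = ((n.choose k : ℝ) * (lam ^ k * degFall 1 (1/lam) (k+1)) /
              ((k.factorial : ℝ) * ((k:ℝ)+1)^2)) * ((-1:ℝ)^n * t^(n+1)) := by
        intro k hk
        simp only [Finset.mem_range] at hk
        have hkn : k ≤ n := by omega
        unfold fterm Acoef
        simp only
        rw [show n - k + k = n from by omega]
        have hsign : (-lam)^k * (-t)^(n-k) * t^(k+1) = lam^k * ((-1:ℝ)^n * t^(n+1)) := by
          rw [neg_pow lam k, neg_pow t (n-k),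
            show ((-1:ℝ)^k * lam^k) * ((-1:ℝ)^(n-k) * t^(n-k)) * t^(k+1)
              = ((-1:ℝ)^k * (-1:ℝ)^(n-k)) * lam^k * (t^(n-k) * t^(k+1)) from by ring,
            ← pow_add, ← pow_add, show k + (n-k) = n from by omega,
            show n-k+(k+1) = n+1 from by omega]
          ring
        linear_combination ((degFall 1 (1/lam) (k+1)) * (n.choose k : ℝ) /
          ((k.factorial : ℝ) * ((k:ℝ)+1)^2)) * hsign
      rw [Finset.sum_congr rfl step, ← Finset.sum_mul, key_identity hlam n]
      ring
    simp only [hdiagval] at hdiag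
    exact hdiag
end

section
/- Let λ be a real number with 0 < λ < 1. Then the improper integral −∫_0^1 log_λ(1−x)/x dx converges and equals ζ_λ(2) = Σ_{n=1}^{∞} (−λ)^{n−1} (1)_{n,1/λ} / (n² (n−1)!). -/
open Finset

open MeasureTheory

namespace Stmt10Aux

noncomputable def bc (lam : ℝ) (n : ℕ) : ℝ :=
  (∏ i ∈ Finset.range n, ((i : ℝ) - lam)) / n.factorial

noncomputable def dd (lam : ℝ) (n : ℕ) : ℝ :=
  (∏ i ∈ Finset.range n, ((i : ℝ) + 1 - lam)) / n.factorial

lemma fact_ne (n : ℕ) : ((n.factorial : ℝ)) ≠ 0 := by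
  exact_mod_cast n.factorial_ne_zero

lemma bc_zero (lam : ℝ) : bc lam 0 = 1 := by simp [bc]

lemma bc_succ_mul (lam : ℝ) (n : ℕ) :
    bc lam (n + 1) * ((n : ℝ) + 1) = ((n : ℝ) - lam) * bc lam n := by
  unfold bc
  rw [Finset.prod_range_succ, Nat.factorial_succ]
  have h1 : ((n.factorial : ℝ)) ≠ 0 := fact_ne n
  have h2 : ((n : ℝ) + 1) ≠ 0 := by positivity
  push_cast
  field_simp

lemma bc_succ_eq (lam : ℝ) (n : ℕ) :
    bc lam (n + 1) = -lam * dd lam n / ((n : ℝ) + 1) := by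
  unfold bc dd
  rw [Finset.prod_range_succ', Nat.factorial_succ]
  have h1 : ((n.factorial : ℝ)) ≠ 0 := fact_ne n
  have h2 : ((n : ℝ) + 1) ≠ 0 := by positivity
  push_cast
  field_simp
  ring

lemma prod_cast_factorial (n : ℕ) :
    ∏ i ∈ Finset.range n, ((i : ℝ) + 1) = n.factorial := by
  induction n with
  | zero => simp
  | succ n ih =>
      rw [Finset.prod_range_succ, ih, Nat.factorial_succ]
      push_cast
      ring

lemma dd_pos {lam : ℝ} (hlam1 : lam < 1) (n : ℕ) : 0 < dd lam n := by
  apply div_pos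
  · apply Finset.prod_pos
    intro i _
    have : (0 : ℝ) ≤ i := Nat.cast_nonneg i
    linarith
  · exact_mod_cast n.factorial_pos

lemma dd_le_one {lam : ℝ} (hlam0 : 0 < lam) (hlam1 : lam < 1) (n : ℕ) :
    dd lam n ≤ 1 := by
  rw [dd, div_le_one (by exact_mod_cast n.factorial_pos)]
  calc ∏ i ∈ Finset.range n, ((i : ℝ) + 1 - lam)
      ≤ ∏ i ∈ Finset.range n, ((i : ℝ) + 1) := by
        apply Finset.prod_le_prod
        · intro i _
          have : (0 : ℝ) ≤ i := Nat.cast_nonneg i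
          linarith
        · intro i _; linarith
    _ = n.factorial := prod_cast_factorial n

lemma abs_bc_succ {lam : ℝ} (hlam0 : 0 < lam) (hlam1 : lam < 1) (n : ℕ) :
    |bc lam (n + 1)| * ((n : ℝ) + 1) = lam * dd lam n := by
  rw [bc_succ_eq]
  have hd := dd_pos hlam1 n
  have hn : (0 : ℝ) < (n : ℝ) + 1 := by positivity
  rw [abs_div, abs_of_pos hn, abs_mul, abs_neg, abs_of_pos hlam0, abs_of_pos hd]
  field_simp

lemma abs_bc_le_one {lam : ℝ} (hlam0 : 0 < lam) (hlam1 : lam < 1) (n : ℕ) :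
    |bc lam n| ≤ 1 := by
  cases n with
  | zero => simp [bc_zero]
  | succ m =>
      have h := abs_bc_succ hlam0 hlam1 m
      have hn : (1 : ℝ) ≤ (m : ℝ) + 1 := by
        have : (0 : ℝ) ≤ m := Nat.cast_nonneg m
        linarith
      have hd := dd_le_one hlam0 hlam1 m
      have hd0 := (dd_pos hlam1 m).le
      nlinarith [abs_nonneg (bc lam (m + 1))]

lemma mul_abs_bc_le_one {lam : ℝ} (hlam0 : 0 < lam) (hlam1 : lam < 1) (n : ℕ) :
    ((n : ℝ) + 1) * |bc lam (n + 1)| ≤ 1 := by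
  have h := abs_bc_succ hlam0 hlam1 n
  have hd := dd_le_one hlam0 hlam1 n
  have hd0 := (dd_pos hlam1 n).le
  nlinarith

lemma summable_bound {r : ℝ} (hr0 : 0 ≤ r) (hr1 : r < 1) (C : ℝ) {b : ℕ → ℝ}
    (h : ∀ n, |b n| ≤ C * r ^ n) : Summable b :=
  Summable.of_norm_bounded ((summable_geometric_of_lt_one hr0 hr1).mul_left C) h

variable {lam : ℝ}

lemma F_eq (hlam0 : 0 < lam) (hlam1 : lam < 1) {x : ℝ} (hx0 : 0 < x) (hx1 : x < 1) :
    ∑' n : ℕ, bc lam n * x ^ n = (1 - x) ^ lam := by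
  set r : ℝ := (1 + x) / 2 with hrdef
  have hr0 : 0 < r := by rw [hrdef]; linarith
  have hrx : x < r := by rw [hrdef]; linarith
  have hr1 : r < 1 := by rw [hrdef]; linarith
  set t : Set ℝ := Set.Ioo (-r) r with htdef
  have habs : ∀ y ∈ t, |y| < r := by
    intro y hy; exact abs_lt.2 ⟨hy.1, hy.2⟩
  -- summable bound for derivative series
  set u : ℕ → ℝ := fun n => (n : ℝ) * |bc lam n| * r ^ (n - 1) with hudef
  have hu_nonneg : ∀ n, 0 ≤ u n := by
    intro n; rw [hudef]; positivity
  have hu_le : ∀ n, u n ≤ (1 / r) * r ^ n := by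
    intro n
    cases n with
    | zero =>
        have h0 : u 0 = 0 := by simp [hudef]
        rw [h0]; positivity
    | succ m =>
        have h1 := mul_abs_bc_le_one hlam0 hlam1 m
        have heq : u (m + 1) = (((m : ℝ) + 1) * |bc lam (m + 1)|) * r ^ m := by
          rw [hudef]; push_cast; ring_nf
        rw [heq]
        have h2 : (1 / r) * r ^ (m + 1) = r ^ m := by
          rw [pow_succ]; field_simp
        rw [h2]
        have h3 : (0 : ℝ) ≤ r ^ m := by positivity
        calc (((m : ℝ) + 1) * |bc lam (m + 1)|) * r ^ m
            ≤ 1 * r ^ m := mul_le_mul_of_nonneg_right h1 h3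
          _ = r ^ m := one_mul _
  have hu : Summable u :=
    summable_bound hr0.le hr1 (1 / r) (fun n => by
      rw [abs_of_nonneg (hu_nonneg n)]; exact hu_le n)
  -- derivative of each term
  have hterm : ∀ (n : ℕ) (z : ℝ), z ∈ t →
      HasDerivAt (fun w : ℝ => bc lam n * w ^ n) (bc lam n * ((n : ℝ) * z ^ (n - 1))) z :=
    fun n z _ => (hasDerivAt_pow n z).const_mul (bc lam n)
  have hbound : ∀ (n : ℕ) (z : ℝ), z ∈ t →
      ‖bc lam n * ((n : ℝ) * z ^ (n - 1))‖ ≤ u n := by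
    intro n z hz
    have hz' := (habs z hz).le
    rw [Real.norm_eq_abs, abs_mul, abs_mul, abs_of_nonneg (Nat.cast_nonneg (α := ℝ) n),
      abs_pow]
    rw [hudef]
    have : |z| ^ (n - 1) ≤ r ^ (n - 1) := pow_le_pow_left₀ (abs_nonneg z) hz' _
    have hb := abs_nonneg (bc lam n)
    have hn : (0 : ℝ) ≤ n := Nat.cast_nonneg n
    calc |bc lam n| * ((n : ℝ) * |z| ^ (n - 1))
        ≤ |bc lam n| * ((n : ℝ) * r ^ (n - 1)) := by
          apply mul_le_mul_of_nonneg_left _ hb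
          exact mul_le_mul_of_nonneg_left this hn
      _ = (n : ℝ) * |bc lam n| * r ^ (n - 1) := by ring
  have hsum0 : Summable (fun n : ℕ => bc lam n * (0 : ℝ) ^ n) := by
    apply summable_of_ne_finset_zero (s := {0})
    intro n hn
    simp only [Finset.mem_singleton] at hn
    simp [zero_pow hn]
  have h0t : (0 : ℝ) ∈ t := ⟨by linarith, hr0⟩
  -- the derivative of the sum
  have hD : ∀ y ∈ t, HasDerivAt (fun z : ℝ => ∑' n : ℕ, bc lam n * z ^ n)
      (∑' n : ℕ, bc lam n * ((n : ℝ) * y ^ (n - 1))) y := by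
    intro y hy
    exact hasDerivAt_tsum_of_isPreconnected hu isOpen_Ioo isPreconnected_Ioo
      hterm hbound h0t hsum0 hy
  -- summability facts at points of t
  have hS1 : ∀ y ∈ t, Summable (fun n : ℕ => bc lam n * y ^ n) := by
    intro y hy
    apply summable_bound hr0.le hr1 1
    intro n
    rw [abs_mul, abs_pow, one_mul]
    have h1 := abs_bc_le_one hlam0 hlam1 n
    have h2 : |y| ^ n ≤ r ^ n := pow_le_pow_left₀ (abs_nonneg y) (habs y hy).le n
    have h3 : (0:ℝ) ≤ |y| ^ n := by positivity
    nlinarith [abs_nonneg (bc lam n)]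
  have hS2 : ∀ y ∈ t, Summable (fun n : ℕ => (n : ℝ) * bc lam n * y ^ n) := by
    intro y hy
    apply summable_bound hr0.le hr1 1
    intro n
    cases n with
    | zero => simp
    | succ m =>
        rw [abs_mul, abs_mul, abs_of_nonneg (Nat.cast_nonneg (α := ℝ) (m+1)), abs_pow,
          one_mul]
        have h1 := mul_abs_bc_le_one hlam0 hlam1 m
        have h2 : |y| ^ (m+1) ≤ r ^ (m+1) :=
          pow_le_pow_left₀ (abs_nonneg y) (habs y hy).le _
        have h3 : (0:ℝ) ≤ |y| ^ (m+1) := by positivity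
        have h4 : (0:ℝ) ≤ ((m:ℝ)+1) * |bc lam (m+1)| := by positivity
        push_cast
        nlinarith
  have hS3 : ∀ y ∈ t, Summable (fun n : ℕ => bc lam n * ((n : ℝ) * y ^ (n - 1))) := by
    intro y hy
    apply summable_bound hr0.le hr1 (1 / r)
    intro n
    have := hbound n y hy
    rw [Real.norm_eq_abs] at this
    exact this.trans (hu_le n)
  -- the ODE
  have hODE : ∀ y ∈ t, (1 - y) * (∑' n : ℕ, bc lam n * ((n : ℝ) * y ^ (n - 1)))
      = -lam * (∑' n : ℕ, bc lam n * y ^ n) := by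
    intro y hy
    set D := ∑' n : ℕ, bc lam n * ((n : ℝ) * y ^ (n - 1)) with hDdef
    have step1 : D = ∑' n : ℕ, bc lam (n + 1) * (((n : ℝ) + 1) * y ^ n) := by
      rw [hDdef, Summable.tsum_eq_zero_add (hS3 y hy)]
      simp only [Nat.cast_zero, zero_mul, mul_zero, zero_add, Nat.cast_add, Nat.cast_one,
        Nat.add_sub_cancel]
    have step2 : D = ∑' n : ℕ, (((n : ℝ) - lam) * (bc lam n * y ^ n)) := by
      rw [step1]
      apply tsum_congr
      intro n
      have h := bc_succ_mul lam n
      calc bc lam (n + 1) * (((n : ℝ) + 1) * y ^ n)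
          = (bc lam (n + 1) * ((n : ℝ) + 1)) * y ^ n := by ring
        _ = (((n : ℝ) - lam) * bc lam n) * y ^ n := by rw [h]
        _ = ((n : ℝ) - lam) * (bc lam n * y ^ n) := by ring
    have step3 : D = (∑' n : ℕ, (n : ℝ) * bc lam n * y ^ n)
        - lam * (∑' n : ℕ, bc lam n * y ^ n) := by
      rw [step2, ← tsum_mul_left (a := lam), ← Summable.tsum_sub (hS2 y hy)
        ((hS1 y hy).mul_left lam)]
      apply tsum_congr; intro n; ring
    have step4 : (∑' n : ℕ, (n : ℝ) * bc lam n * y ^ n) = y * D := by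
      rw [hDdef, ← tsum_mul_left (a := y)]
      apply tsum_congr
      intro n
      cases n with
      | zero => simp
      | succ m =>
          simp only [Nat.add_sub_cancel, pow_succ]
          push_cast
          ring
    rw [step4] at step3
    linear_combination step3
  -- the quotient function is constant
  set G : ℝ → ℝ := fun z => (∑' n : ℕ, bc lam n * z ^ n) * (1 - z) ^ (-lam) with hGdef
  have hG : ∀ y ∈ t, HasDerivAt G 0 y := by
    intro y hy
    have h1y : 0 < 1 - y := by
      have h2 := hy.2
      linarith
    have hlin : HasDerivAt (fun z : ℝ => 1 - z) (-1) y := by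
      simpa using (hasDerivAt_id y).const_sub 1
    have hrpow : HasDerivAt (fun w : ℝ => w ^ (-lam))
        (-lam * (1 - y) ^ (-lam - 1)) (1 - y) :=
      Real.hasDerivAt_rpow_const (Or.inl h1y.ne')
    have hcomp : HasDerivAt (fun z : ℝ => (1 - z) ^ (-lam))
        (lam * (1 - y) ^ (-lam - 1)) y := by
      have := hrpow.comp y hlin
      exact this.congr_deriv (by ring)
    have hmul := (hD y hy).mul hcomp
    have hzero : (∑' n : ℕ, bc lam n * ((n : ℝ) * y ^ (n - 1))) * (1 - y) ^ (-lam)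
        + (∑' n : ℕ, bc lam n * y ^ n) * (lam * (1 - y) ^ (-lam - 1)) = 0 := by
      have hrw := Real.rpow_add h1y 1 (-lam - 1)
      have hre : (1 : ℝ) + (-lam - 1) = -lam := by ring
      rw [hre, Real.rpow_one] at hrw
      rw [hrw]
      have hO := hODE y hy
      linear_combination ((1 - y) ^ (-lam - 1)) * hO
    rw [hGdef]
    have := hmul
    rw [hzero] at this
    exact this
  have hsub : Set.Icc (0 : ℝ) x ⊆ t := by
    intro y hy
    exact ⟨by linarith [hy.1], by linarith [hy.2]⟩
  have hcont : ContinuousOn G (Set.Icc 0 x) := fun y hy =>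
    (hG y (hsub hy)).continuousAt.continuousWithinAt
  have hconst := constant_of_has_deriv_right_zero hcont
    (fun y hy => (hG y (hsub (Set.Ico_subset_Icc_self hy))).hasDerivWithinAt) x
    ⟨hx0.le, le_refl x⟩
  have hG0 : G 0 = 1 := by
    rw [hGdef]
    simp only [sub_zero, Real.one_rpow, mul_one]
    rw [tsum_eq_single 0 (fun n hn => by simp [zero_pow hn])]
    simp [bc_zero]
  rw [hG0] at hconst
  -- conclude
  have h1x : 0 < 1 - x := by linarith
  have hGx : (∑' n : ℕ, bc lam n * x ^ n) * (1 - x) ^ (-lam) = 1 := hconst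
  have := congrArg (fun w => w * (1 - x) ^ lam) hGx
  simp only [one_mul] at this
  calc ∑' n : ℕ, bc lam n * x ^ n
      = (∑' n : ℕ, bc lam n * x ^ n) * ((1 - x) ^ (-lam) * (1 - x) ^ lam) := by
        rw [← Real.rpow_add h1x, neg_add_cancel, Real.rpow_zero, mul_one]
    _ = (1 - x) ^ lam := by rw [← mul_assoc, this]

lemma degFall_eq (hlam0 : 0 < lam) (n : ℕ) :
    (-lam) ^ n * degFall 1 (1 / lam) (n + 1) =
      ∏ i ∈ Finset.range n, ((i : ℝ) + 1 - lam) := by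
  unfold degFall
  rw [Finset.prod_range_succ']
  simp only [Nat.cast_zero, zero_mul, sub_zero, mul_one]
  rw [show (-lam) ^ n = ∏ _i ∈ Finset.range n, -lam by
    rw [Finset.prod_const, Finset.card_range], ← Finset.prod_mul_distrib]
  apply Finset.prod_congr rfl
  intro i _
  have hl : lam ≠ 0 := hlam0.ne'
  push_cast
  field_simp
  ring

lemma series_eq (hlam0 : 0 < lam) (hlam1 : lam < 1) {x : ℝ}
    (hx0 : 0 < x) (hx1 : x < 1) :
    degLog lam (1 - x) / x = -∑' n : ℕ, dd lam n / ((n : ℝ) + 1) * x ^ n := by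
  have hF := F_eq hlam0 hlam1 hx0 hx1
  have hS1 : Summable (fun n : ℕ => bc lam n * x ^ n) := by
    apply summable_bound (le_of_lt hx0) hx1 1
    intro n
    rw [abs_mul, abs_pow, one_mul, abs_of_pos hx0]
    have h1 := abs_bc_le_one hlam0 hlam1 n
    have h2 : (0:ℝ) ≤ x ^ n := by positivity
    nlinarith
  have h0 : (1 - x) ^ lam = 1 + ∑' n : ℕ, bc lam (n + 1) * x ^ (n + 1) := by
    rw [← hF, Summable.tsum_eq_zero_add hS1, bc_zero, pow_zero, mul_one]
  have hterm : ∀ n : ℕ, bc lam (n + 1) * x ^ (n + 1)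
      = (-lam * x) * (dd lam n / ((n : ℝ) + 1) * x ^ n) := by
    intro n
    rw [bc_succ_eq, pow_succ]
    ring
  have h1 : ∑' n : ℕ, bc lam (n + 1) * x ^ (n + 1)
      = (-lam * x) * ∑' n : ℕ, dd lam n / ((n : ℝ) + 1) * x ^ n := by
    rw [← tsum_mul_left]
    exact tsum_congr hterm
  unfold degLog
  rw [h0, h1]
  have hl : lam ≠ 0 := hlam0.ne'
  have hx : x ≠ 0 := hx0.ne'
  field_simp
  ring

lemma rpow_subadd (hlam0 : 0 < lam) (hlam1 : lam < 1) {a b : ℝ}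
    (ha : 0 ≤ a) (hb : 0 ≤ b) : (a + b) ^ lam ≤ a ^ lam + b ^ lam := by
  have h := NNReal.rpow_add_le_add_rpow a.toNNReal b.toNNReal hlam0.le hlam1.le
  have h2 := NNReal.coe_le_coe.2 h
  rw [← Real.toNNReal_add ha hb] at h2
  simp only [NNReal.coe_add, NNReal.coe_rpow, Real.coe_toNNReal _ (add_nonneg ha hb),
    Real.coe_toNNReal a ha, Real.coe_toNNReal b hb] at h2
  exact h2

end Stmt10Aux

open Stmt10Aux

theorem stmt_10 (lam : ℝ) (hlam0 : 0 < lam) (hlam1 : lam < 1) :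
    MeasureTheory.IntegrableOn (fun x : ℝ => degLog lam (1 - x) / x) (Set.Ioo 0 1) ∧
      -∫ x in Set.Ioo (0 : ℝ) 1, degLog lam (1 - x) / x =
        ∑' n : ℕ, (-lam) ^ n * degFall 1 (1 / lam) (n + 1) /
          (((n : ℝ) + 1) ^ 2 * (n.factorial : ℝ)) := by
  have hl : lam ≠ 0 := hlam0.ne'
  -- continuity of the integrand on (0,1)
  have hcont : ContinuousOn (fun x : ℝ => degLog lam (1 - x) / x) (Set.Ioo 0 1) := by
    intro x hx
    obtain ⟨hx0, hx1⟩ := hx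
    apply ContinuousAt.continuousWithinAt
    have h1x : (1 : ℝ) - x ≠ 0 := by intro h; nlinarith
    have hr : ContinuousAt (fun x : ℝ => (1 - x) ^ lam) x := by
      have h1 : ContinuousAt (fun y : ℝ => y ^ lam) (1 - x) :=
        Real.continuousAt_rpow_const _ _ (Or.inl h1x)
      exact h1.comp ((continuous_const.sub continuous_id).continuousAt)
    have : ContinuousAt (fun x : ℝ => degLog lam (1 - x)) x := by
      simp only [degLog]
      exact (hr.sub continuousAt_const).div_const lam
    exact this.div continuousAt_id hx0.ne'
  have hmeas : AEStronglyMeasurable (fun x : ℝ => degLog lam (1 - x) / x)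
      (volume.restrict (Set.Ioo 0 1)) := hcont.aestronglyMeasurable measurableSet_Ioo
  -- integrability via domination by x ^ (lam - 1) / lam
  have hbound_int : IntegrableOn (fun x : ℝ => x ^ (lam - 1) / lam) (Set.Ioo 0 1) := by
    have h := intervalIntegral.intervalIntegrable_rpow' (a := (0:ℝ)) (b := 1) (r := lam - 1)
      (by linarith)
    rw [intervalIntegrable_iff_integrableOn_Ioo_of_le zero_le_one] at h
    exact h.div_const lam
  have hInt : IntegrableOn (fun x : ℝ => degLog lam (1 - x) / x) (Set.Ioo 0 1) := by
    apply Integrable.mono' hbound_int hmeas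
    filter_upwards [ae_restrict_mem measurableSet_Ioo] with x hx
    obtain ⟨hx0, hx1⟩ := hx
    have h1x : 0 < 1 - x := by linarith
    have hle1 : (1 - x) ^ lam ≤ 1 := Real.rpow_le_one h1x.le (by linarith) hlam0.le
    have hsp : (1 : ℝ) ≤ (1 - x) ^ lam + x ^ lam := by
      have := rpow_subadd hlam0 hlam1 h1x.le hx0.le
      rw [show (1 - x) + x = 1 by ring, Real.one_rpow] at this
      exact this
    have hfa : degLog lam (1 - x) / x = -((1 - (1 - x) ^ lam) / (lam * x)) := by
      unfold degLog
      rw [div_div, show (1 : ℝ) - (1 - x) ^ lam = -((1 - x) ^ lam - 1) from by ring,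
        neg_div, neg_neg]
    have hnn : 0 ≤ (1 - (1 - x) ^ lam) / (lam * x) := by
      apply div_nonneg (by linarith) (by positivity)
    rw [hfa, norm_neg, Real.norm_of_nonneg hnn]
    have hre : x ^ (lam - 1) / lam = x ^ lam / (lam * x) := by
      rw [Real.rpow_sub hx0, Real.rpow_one, div_div, mul_comm x lam]
    rw [hre]
    apply div_le_div_of_nonneg_right ?_ (by positivity)
    · linarith
  refine ⟨hInt, ?_⟩
  -- the term functions
  set g : ℕ → ℝ → ℝ := fun m x => dd lam m / ((m : ℝ) + 1) * x ^ m with hgdef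
  have hgcont : ∀ m, Continuous (g m) := fun m =>
    continuous_const.mul (continuous_pow m)
  have hgint : ∀ m, IntegrableOn (g m) (Set.Ioo 0 1) := fun m =>
    ((hgcont m).integrableOn_Icc).mono_set Set.Ioo_subset_Icc_self
  have hval : ∀ m, ∫ x in Set.Ioo (0:ℝ) 1, g m x = dd lam m / ((m : ℝ) + 1) ^ 2 := by
    intro m
    rw [hgdef]
    simp only
    rw [MeasureTheory.integral_const_mul, ← integral_Ioc_eq_integral_Ioo,
      ← intervalIntegral.integral_of_le zero_le_one, integral_pow]
    push_cast
    rw [one_pow, zero_pow (Nat.succ_ne_zero m)]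
    push_cast
    rw [sub_zero, div_mul_div_comm, mul_one, sq]
  have hgnn : ∀ m, ∀ x ∈ Set.Ioo (0:ℝ) 1, 0 ≤ g m x := by
    intro m x hx
    have h1 := (dd_pos hlam1 m).le
    have h2 : (0:ℝ) ≤ x ^ m := pow_nonneg hx.1.le m
    have h3 : (0:ℝ) < (m:ℝ) + 1 := by positivity
    positivity
  have hlint : ∀ m, (∫⁻ x in Set.Ioo (0:ℝ) 1, ‖g m x‖₊)
      = ENNReal.ofReal (dd lam m / ((m : ℝ) + 1) ^ 2) := by
    intro m
    rw [← hval m, ofReal_integral_eq_lintegral_ofReal (hgint m)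
      (by filter_upwards [ae_restrict_mem measurableSet_Ioo] with x hx
          exact hgnn m x hx)]
    apply lintegral_congr_ae
    filter_upwards [ae_restrict_mem measurableSet_Ioo] with x hx
    rw [← enorm_eq_nnnorm, Real.enorm_eq_ofReal (hgnn m x hx)]
  have hsummable : Summable (fun m : ℕ => dd lam m / ((m : ℝ) + 1) ^ 2) := by
    have hbase : Summable (fun n : ℕ => 1 / ((n : ℝ) + 1) ^ 2) := by
      have h1 : Summable (fun n : ℕ => 1 / (n : ℝ) ^ 2) :=
        Real.summable_one_div_nat_pow.mpr one_lt_two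
      have h2 := (summable_nat_add_iff 1).mpr h1
      apply h2.congr
      intro n
      push_cast
      ring
    apply Summable.of_nonneg_of_le ?_ ?_ hbase
    · intro m
      have := (dd_pos hlam1 m).le
      positivity
    · intro m
      have h1 := dd_le_one hlam0 hlam1 m
      have h2 : (0:ℝ) < ((m:ℝ)+1)^2 := by positivity
      exact div_le_div_of_nonneg_right h1 h2.le
  have hne : (∑' m : ℕ, ∫⁻ x in Set.Ioo (0:ℝ) 1, ‖g m x‖₊) ≠ ⊤ := by
    simp_rw [hlint]
    rw [← ENNReal.ofReal_tsum_of_nonneg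
      (fun m => by have := (dd_pos hlam1 m).le; positivity) hsummable]
    exact ENNReal.ofReal_ne_top
  have hkey : ∫ x in Set.Ioo (0:ℝ) 1, (∑' m : ℕ, g m x)
      = ∑' m : ℕ, ∫ x in Set.Ioo (0:ℝ) 1, g m x :=
    MeasureTheory.integral_tsum (fun m => (hgcont m).aestronglyMeasurable) hne
  calc -∫ x in Set.Ioo (0:ℝ) 1, degLog lam (1 - x) / x
      = ∫ x in Set.Ioo (0:ℝ) 1, -(degLog lam (1 - x) / x) := (integral_neg _).symm
    _ = ∫ x in Set.Ioo (0:ℝ) 1, (∑' m : ℕ, g m x) := by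
        apply setIntegral_congr_fun measurableSet_Ioo
        intro x hx
        simp only
        rw [series_eq hlam0 hlam1 hx.1 hx.2, neg_neg]
    _ = ∑' m : ℕ, ∫ x in Set.Ioo (0:ℝ) 1, g m x := hkey
    _ = ∑' m : ℕ, dd lam m / ((m:ℝ)+1)^2 := tsum_congr hval
    _ = ∑' n : ℕ, (-lam) ^ n * degFall 1 (1 / lam) (n + 1) /
          (((n : ℝ) + 1) ^ 2 * (n.factorial : ℝ)) := by
        apply tsum_congr
        intro n
        rw [degFall_eq hlam0 n]
        simp only [dd]
        rw [div_div, mul_comm ((n.factorial : ℝ)) (((n:ℝ)+1)^2)]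
end
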